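/- arXiv:1912.10381 — 6 statements merged into one kernel-verified Lean document; each statement's English description precedes it below -/
import Mathlib

section
/- For every positive integer a, the three real numbers 1, log(a/(a+1)), and log((a+1)/(a+2)) are linearly independent over the rationals; that is, if q, p₁, p₂ are integers, not all zero, then q + p₁·log(a/(a+1)) + p₂·log((a+1)/(a+2)) ≠ 0. -/
open Real MeasureTheory intervalIntegral Filter

noncomputable def B (n k : ℕ) : ℝ := ∫ x in (0:ℝ)..1, (x*(1-x))^k * Real.exp (n*x)

lemma contB (n k : ℕ) : Continuous (fun x : ℝ => (x*(1-x))^k * Real.exp (n*x)) := by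
  fun_prop

lemma intB (n k : ℕ) :
    IntervalIntegrable (fun x : ℝ => (x*(1-x))^k * Real.exp (n*x)) volume 0 1 :=
  (contB n k).intervalIntegrable _ _

lemma hasDerivAt_g (m : ℕ) (x : ℝ) :
    HasDerivAt (fun x : ℝ => (x*(1-x))^m) (m * (x*(1-x))^(m-1) * (1-2*x)) x := by
  have h1 : HasDerivAt (fun x : ℝ => x*(1-x)) (1-2*x) x := by
    have := (hasDerivAt_id x).mul ((hasDerivAt_const x (1:ℝ)).sub (hasDerivAt_id x))
    simp only [id] at this
    refine this.congr_deriv ?_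
    simp only [Pi.sub_apply, id]
    ring
  exact h1.pow m

lemma hasDerivAt_e (n : ℕ) (x : ℝ) :
    HasDerivAt (fun x : ℝ => Real.exp (n*x)) (Real.exp (n*x) * n) x := by
  have h1 : HasDerivAt (fun x : ℝ => (n:ℝ)*x) (n:ℝ) x := by
    simpa using (hasDerivAt_id x).const_mul (n:ℝ)
  exact h1.exp

lemma B0 (n : ℕ) : (n:ℝ) * B n 0 = Real.exp n - 1 := by
  have hderiv : ∀ x ∈ Set.uIcc (0:ℝ) 1,
      HasDerivAt (fun x : ℝ => Real.exp (n*x)) (Real.exp (n*x) * n) x :=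
    fun x _ => hasDerivAt_e n x
  have hint : IntervalIntegrable (fun x : ℝ => Real.exp (n*x) * n) volume 0 1 := by
    apply Continuous.intervalIntegrable
    fun_prop
  have h := intervalIntegral.integral_eq_sub_of_hasDerivAt hderiv hint
  have h2 : (∫ x in (0:ℝ)..1, Real.exp (n*x) * n) = (n:ℝ) * B n 0 := by
    simp only [B, pow_zero, one_mul]
    rw [intervalIntegral.integral_mul_const]
    ring
  rw [h2] at h
  rw [h]
  norm_num

lemma B1 (n : ℕ) : (n:ℝ)^2 * B n 1 + 2 * B n 0 = Real.exp n + 1 := by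
  have hderiv : ∀ x ∈ Set.uIcc (0:ℝ) 1,
      HasDerivAt (fun x : ℝ => ((n:ℝ)*(x*(1-x)) - (1-2*x)) * Real.exp (n*x))
        (((n:ℝ)^2*(x*(1-x)) + 2) * Real.exp (n*x)) x := by
    intro x _
    have h1 := ((hasDerivAt_g 1 x).const_mul (n:ℝ)).sub
      (((hasDerivAt_const x (1:ℝ)).sub ((hasDerivAt_id x).const_mul 2)))
    have h := h1.mul (hasDerivAt_e n x)
    refine (h.congr_of_eventuallyEq (Filter.Eventually.of_forall fun y => ?_)).congr_deriv ?_
    · simp only [id, Pi.sub_apply, Pi.mul_apply]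
      ring
    · simp only [id, pow_one, Pi.sub_apply]
      norm_num
      ring
  have hint : IntervalIntegrable
      (fun x : ℝ => ((n:ℝ)^2*(x*(1-x)) + 2) * Real.exp (n*x)) volume 0 1 := by
    apply Continuous.intervalIntegrable
    fun_prop
  have heq := intervalIntegral.integral_eq_sub_of_hasDerivAt hderiv hint
  have hsplit : (∫ x in (0:ℝ)..1, ((n:ℝ)^2*(x*(1-x)) + 2) * Real.exp (n*x))
      = (n:ℝ)^2 * B n 1 + 2 * B n 0 := by
    rw [B, B]
    rw [← intervalIntegral.integral_const_mul, ← intervalIntegral.integral_const_mul,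
      ← intervalIntegral.integral_add ((intB n 1).const_mul _) ((intB n 0).const_mul _)]
    congr 1 with x
    ring
  rw [hsplit] at heq
  rw [heq]
  norm_num

lemma Brec (n m : ℕ) :
    (n:ℝ)^2 * B n (m+2) =
      ((m:ℝ)+2)*((m:ℝ)+1) * B n m - (4*(m:ℝ)+6)*((m:ℝ)+2) * B n (m+1) := by
  have hderiv : ∀ x ∈ Set.uIcc (0:ℝ) 1,
      HasDerivAt (fun x : ℝ =>
          ((n:ℝ) * (x*(1-x))^(m+2) - ((m:ℝ)+2) * (x*(1-x))^(m+1) * (1-2*x)) * Real.exp (n*x))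
        (((n:ℝ)^2 * (x*(1-x))^(m+2) - ((m:ℝ)+2)*((m:ℝ)+1) * (x*(1-x))^m
            + (4*(m:ℝ)+6)*((m:ℝ)+2) * (x*(1-x))^(m+1)) * Real.exp (n*x)) x := by
    intro x _
    have h1 := (((hasDerivAt_g (m+2) x).const_mul (n:ℝ)).sub
      (((hasDerivAt_g (m+1) x).const_mul ((m:ℝ)+2)).mul
        ((hasDerivAt_const x (1:ℝ)).sub ((hasDerivAt_id x).const_mul 2))))
    have h := h1.mul (hasDerivAt_e n x)
    have e1 : m + 2 - 1 = m + 1 := rfl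
    have e2 : m + 1 - 1 = m := rfl
    refine (h.congr_of_eventuallyEq (Filter.Eventually.of_forall fun y => ?_)).congr_deriv ?_
    · simp only [id, Pi.sub_apply, Pi.mul_apply]
    simp only [id, e1, e2, Pi.sub_apply, Pi.mul_apply]
    push_cast
    ring
  have hint : IntervalIntegrable (fun x : ℝ =>
      ((n:ℝ)^2 * (x*(1-x))^(m+2) - ((m:ℝ)+2)*((m:ℝ)+1) * (x*(1-x))^m
        + (4*(m:ℝ)+6)*((m:ℝ)+2) * (x*(1-x))^(m+1)) * Real.exp (n*x)) volume 0 1 := by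
    apply Continuous.intervalIntegrable
    fun_prop
  have heq := intervalIntegral.integral_eq_sub_of_hasDerivAt hderiv hint
  have hsplit : (∫ x in (0:ℝ)..1,
      ((n:ℝ)^2 * (x*(1-x))^(m+2) - ((m:ℝ)+2)*((m:ℝ)+1) * (x*(1-x))^m
        + (4*(m:ℝ)+6)*((m:ℝ)+2) * (x*(1-x))^(m+1)) * Real.exp (n*x))
      = (n:ℝ)^2 * B n (m+2) - ((m:ℝ)+2)*((m:ℝ)+1) * B n m
        + (4*(m:ℝ)+6)*((m:ℝ)+2) * B n (m+1) := by
    simp only [B]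
    rw [← intervalIntegral.integral_const_mul, ← intervalIntegral.integral_const_mul,
      ← intervalIntegral.integral_const_mul,
      ← intervalIntegral.integral_sub ((intB n (m+2)).const_mul _) ((intB n m).const_mul _),
      ← intervalIntegral.integral_add
        (((intB n (m+2)).const_mul _).sub ((intB n m).const_mul _))
        ((intB n (m+1)).const_mul _)]
    congr 1
    funext x
    ring
  rw [hsplit] at heq
  have hF1 : ((n:ℝ) * ((1:ℝ)*(1-1))^(m+2) - ((m:ℝ)+2) * ((1:ℝ)*(1-1))^(m+1) * (1-2*1))
      * Real.exp (n*1) = 0 := by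
    simp [zero_pow]
  have hF0 : ((n:ℝ) * ((0:ℝ)*(1-0))^(m+2) - ((m:ℝ)+2) * ((0:ℝ)*(1-0))^(m+1) * (1-2*0))
      * Real.exp (n*0) = 0 := by
    simp [zero_pow]
  rw [hF1, hF0] at heq
  linarith [heq]

lemma Bint (n : ℕ) : ∀ k : ℕ, ∃ a b : ℤ,
    (n:ℝ)^(2*k+1) * B n k = (k.factorial : ℝ) * ((a:ℝ) + (b:ℝ) * Real.exp n) := by
  intro k
  induction k using Nat.strong_induction_on with
  | _ k ih =>
    match k with
    | 0 =>
      refine ⟨-1, 1, ?_⟩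
      have h0 := B0 n
      norm_num
      linarith
    | 1 =>
      refine ⟨(n:ℤ) + 2, (n:ℤ) - 2, ?_⟩
      have h0 := B0 n
      have h1 := B1 n
      have hh : (n:ℝ)^(2*1+1) * B n 1 = (n:ℝ) * ((n:ℝ)^2 * B n 1) := by ring
      have h2 : (n:ℝ)^2 * B n 1 = Real.exp n + 1 - 2 * B n 0 := by linarith
      rw [hh, h2]
      norm_num
      push_cast
      linear_combination (-2:ℝ) * h0
    | (m+2) =>
      obtain ⟨a₁, b₁, h₁⟩ := ih m (by omega)
      obtain ⟨a₂, b₂, h₂⟩ := ih (m+1) (by omega)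
      refine ⟨(n:ℤ)^2 * a₁ - (4*(m:ℤ)+6) * a₂,
              (n:ℤ)^2 * b₁ - (4*(m:ℤ)+6) * b₂, ?_⟩
      have hrec := Brec n m
      have hpow : (n:ℝ)^(2*(m+2)+1) * B n (m+2)
          = (n:ℝ)^(2*m+3) * ((n:ℝ)^2 * B n (m+2)) := by ring
      rw [hpow, hrec]
      have hfac : ((m+2).factorial : ℝ) = ((m:ℝ)+2) * ((m:ℝ)+1) * (m.factorial : ℝ) := by
        rw [Nat.factorial_succ, Nat.factorial_succ]
        push_cast
        ring
      have hfac3 : ((m+1).factorial : ℝ) = ((m:ℝ)+1) * (m.factorial : ℝ) := by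
        rw [Nat.factorial_succ]
        push_cast
        ring
      have e1 : (n:ℝ)^(2*m+3) * (((m:ℝ)+2)*((m:ℝ)+1) * B n m)
          = ((m:ℝ)+2)*((m:ℝ)+1) * (n:ℝ)^2 * ((n:ℝ)^(2*m+1) * B n m) := by ring
      have e2 : (n:ℝ)^(2*m+3) * ((4*(m:ℝ)+6)*((m:ℝ)+2) * B n (m+1))
          = (4*(m:ℝ)+6)*((m:ℝ)+2) * ((n:ℝ)^(2*(m+1)+1) * B n (m+1)) := by ring
      rw [mul_sub, e1, e2, h₁, h₂, hfac, hfac3]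
      push_cast
      ring

lemma Bpos (n k : ℕ) : 0 < B n k := by
  apply intervalIntegral.intervalIntegral_pos_of_pos_on (intB n k) _ one_pos
  intro x hx
  have h1 : 0 < x := hx.1
  have h2 : 0 < 1 - x := by linarith [hx.2]
  positivity

lemma Bbound (n k : ℕ) : B n k ≤ (1/4)^k * Real.exp n := by
  have h : B n k ≤ ∫ _x in (0:ℝ)..1, (1/4:ℝ)^k * Real.exp n := by
    apply intervalIntegral.integral_mono_on zero_le_one (intB n k)
      (intervalIntegrable_const)
    intro x hx
    have hx0 : 0 ≤ x := hx.1
    have hx1 : x ≤ 1 := hx.2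
    have hg0 : 0 ≤ x * (1-x) := by nlinarith
    have hg : x * (1-x) ≤ 1/4 := by nlinarith [sq_nonneg (x - 1/2)]
    have hp : (x*(1-x))^k ≤ (1/4:ℝ)^k := pow_le_pow_left₀ hg0 hg k
    have he : Real.exp (n*x) ≤ Real.exp n := by
      apply Real.exp_le_exp.2
      nlinarith [Nat.cast_nonneg (α := ℝ) n]
    calc (x*(1-x))^k * Real.exp (n*x) ≤ (1/4:ℝ)^k * Real.exp (n*x) := by
          apply mul_le_mul_of_nonneg_right hp (Real.exp_pos _).le
      _ ≤ (1/4:ℝ)^k * Real.exp n := by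
          apply mul_le_mul_of_nonneg_left he (by positivity)
  simpa using h

lemma irrational_exp_nat (n : ℕ) (hn : 0 < n) : Irrational (Real.exp n) := by
  rintro ⟨r, hr⟩
  have hrpos : (0:ℝ) < r := by rw [hr]; exact Real.exp_pos _
  have hrq : (0:ℚ) < r := by exact_mod_cast hrpos
  set D : ℕ := r.den with hD
  set N : ℤ := r.num with hN
  have hNpos : 0 < N := Rat.num_pos.2 hrq
  have hDpos : 0 < D := r.pos
  have hre : Real.exp n * D = N := by
    rw [← hr, ← Rat.num_div_den r]
    push_cast
    rw [div_mul_cancel₀]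
    exact_mod_cast hDpos.ne'
  have key : ∀ k : ℕ, (1:ℝ) ≤ (D:ℝ) * ((n:ℝ) * ((n:ℝ)^2/4)^k / k.factorial * Real.exp n) := by
    intro k
    obtain ⟨a, b, hab⟩ := Bint n k
    have hkf : (0:ℝ) < (k.factorial : ℝ) := by positivity
    have hBpos := Bpos n k
    have hn' : (0:ℝ) < n := by exact_mod_cast hn
    have habpos : 0 < (a:ℝ) + (b:ℝ) * Real.exp n := by
      have h' : 0 < (n:ℝ)^(2*k+1) * B n k := by positivity
      rw [hab] at h'
      nlinarith
    have hcast : (((D:ℤ)*a + b*N : ℤ) : ℝ) = (D:ℝ) * ((a:ℝ) + (b:ℝ) * Real.exp n) := by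
      push_cast
      rw [← hre]
      ring
    have h0 : (0:ℝ) < (((D:ℤ)*a + b*N : ℤ) : ℝ) := by
      rw [hcast]; positivity
    have hint0 : (0:ℤ) < (D:ℤ)*a + b*N := by exact_mod_cast h0
    have h1 : (1:ℝ) ≤ (D:ℝ) * ((a:ℝ) + (b:ℝ) * Real.exp n) := by
      rw [← hcast]
      exact_mod_cast hint0
    refine h1.trans ?_
    apply mul_le_mul_of_nonneg_left _ (by positivity)
    have heq : (a:ℝ) + b * Real.exp n = (n:ℝ)^(2*k+1) * B n k / k.factorial := by
      rw [hab]; field_simp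
    rw [heq, div_le_iff₀ hkf]
    have hR : (n:ℝ) * ((n:ℝ)^2/4)^k / k.factorial * Real.exp n * k.factorial
        = (n:ℝ)^(2*k+1) * ((1/4:ℝ)^k * Real.exp n) := by
      have hsplit : ((n:ℝ)^2/4)^k = ((n:ℝ)^2)^k * (1/4:ℝ)^k := by
        rw [div_eq_mul_one_div, mul_pow]
      have hpow : (n:ℝ)^(2*k+1) = ((n:ℝ)^2)^k * n := by
        rw [pow_succ, pow_mul]
      rw [hsplit, hpow]
      field_simp
    rw [hR]
    exact mul_le_mul_of_nonneg_left (Bbound n k) (by positivity)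
  have lim : Filter.Tendsto
      (fun k : ℕ => (D:ℝ) * ((n:ℝ) * ((n:ℝ)^2/4)^k / k.factorial * Real.exp n))
      Filter.atTop (nhds 0) := by
    have h := FloorSemiring.tendsto_pow_div_factorial_atTop (K := ℝ) ((n:ℝ)^2/4)
    have h2 := h.const_mul ((D:ℝ) * n * Real.exp n)
    rw [mul_zero] at h2
    convert h2 using 2 with k
    field_simp
  obtain ⟨k, hk⟩ := (lim.eventually (gt_mem_nhds one_pos)).exists
  exact absurd (key k) (not_le.2 hk)

lemma padicValRat_zpow {p : ℕ} [hp : Fact p.Prime] {q : ℚ} (hq : q ≠ 0) (z : ℤ) :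
    padicValRat p (q ^ z) = z * padicValRat p q := by
  cases z with
  | ofNat m =>
    rw [Int.ofNat_eq_coe, zpow_natCast, padicValRat.pow q]
  | negSucc m =>
    rw [zpow_negSucc, padicValRat.inv, padicValRat.pow q]
    simp only [Int.negSucc_eq]
    push_cast
    ring

theorem log_consecutive_ratios_linear_independent (a : ℕ) (ha : 0 < a) :
    ∀ q p₁ p₂ : ℤ, ¬(q = 0 ∧ p₁ = 0 ∧ p₂ = 0) →
      (q : ℝ) + (p₁ : ℝ) * Real.log ((a : ℝ) / (a + 1)) +
        (p₂ : ℝ) * Real.log (((a : ℝ) + 1) / (a + 2)) ≠ 0 := by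
  intro q p₁ p₂ hne h
  have ha' : (0:ℝ) < a := by exact_mod_cast ha
  set X : ℝ := (a:ℝ)/((a:ℝ)+1) with hXdef
  set Y : ℝ := ((a:ℝ)+1)/((a:ℝ)+2) with hYdef
  have hX : 0 < X := by positivity
  have hY : 0 < Y := by positivity
  have hexp : Real.exp (q:ℝ) = X ^ (-p₁) * Y ^ (-p₂) := by
    rw [← Real.rpow_intCast X (-p₁), ← Real.rpow_intCast Y (-p₂),
        Real.rpow_def_of_pos hX, Real.rpow_def_of_pos hY, ← Real.exp_add]
    congr 1
    push_cast
    linear_combination h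
  -- the rational counterpart
  set x : ℚ := (a:ℚ)/((a:ℚ)+1) with hxdef
  set y : ℚ := ((a:ℚ)+1)/((a:ℚ)+2) with hydef
  have hax : (0:ℚ) < a := by exact_mod_cast ha
  have hx0 : x ≠ 0 := by positivity
  have hy0 : y ≠ 0 := by positivity
  have hcastx : ((x:ℚ):ℝ) = X := by rw [hxdef, hXdef]; push_cast; ring
  have hcasty : ((y:ℚ):ℝ) = Y := by rw [hydef, hYdef]; push_cast; ring
  have hcastR : ((x ^ (-p₁) * y ^ (-p₂) : ℚ) : ℝ) = X ^ (-p₁) * Y ^ (-p₂) := by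
    push_cast [hcastx, hcasty]
    rfl
  rcases lt_trichotomy q 0 with hq | hq | hq
  · -- q < 0 : exp(-q) = (x^p₁ y^p₂ : ℚ) rational, contradiction
    have hn : 0 < (-q).toNat := by omega
    refine irrational_exp_nat (-q).toNat hn ⟨(x ^ (-p₁) * y ^ (-p₂))⁻¹, ?_⟩
    push_cast [hcastR]
    have ht : (((-q).toNat : ℤ)) = -q := Int.toNat_of_nonneg (by omega)
    have ht' : (((-q).toNat : ℕ) : ℝ) = -(q:ℝ) := by exact_mod_cast ht
    rw [ht', Real.exp_neg, hexp]
  · -- q = 0 : the multiplicative relation forces p₁ = p₂ = 0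
    subst hq
    have h1 : X ^ (-p₁) * Y ^ (-p₂) = 1 := by
      rw [← hexp]; simp
    have hq1 : x ^ (-p₁) * y ^ (-p₂) = 1 := by
      have : ((x ^ (-p₁) * y ^ (-p₂) : ℚ) : ℝ) = ((1:ℚ):ℝ) := by
        rw [hcastR, h1]; norm_num
      exact_mod_cast this
    -- p-adic valuation at a prime dividing a+1
    set p : ℕ := (a+1).minFac with hpdef
    have hp : p.Prime := Nat.minFac_prime (by omega)
    haveI : Fact p.Prime := ⟨hp⟩
    have hpd : p ∣ a + 1 := Nat.minFac_dvd _
    have hpa : ¬ p ∣ a := by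
      intro hc
      have h1 : p ∣ 1 := by simpa using Nat.dvd_sub hpd hc
      exact hp.one_lt.ne' (Nat.dvd_one.mp h1)
    have hpa2 : ¬ p ∣ a + 2 := by
      intro hc
      have h1 : p ∣ 1 := by simpa using Nat.dvd_sub hc hpd
      exact hp.one_lt.ne' (Nat.dvd_one.mp h1)
    -- valuations
    have hvx : padicValRat p x = - (padicValNat p (a+1) : ℤ) := by
      rw [hxdef, show ((a:ℚ)+1) = ((a+1 : ℕ) : ℚ) by push_cast; ring,
        padicValRat.div (p := p) (by exact_mod_cast hax.ne') (by positivity),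
        padicValRat.of_nat, padicValRat.of_nat,
        padicValNat.eq_zero_of_not_dvd hpa]
      ring
    have hvy : padicValRat p y = (padicValNat p (a+1) : ℤ) := by
      rw [hydef, show ((a:ℚ)+1) = ((a+1 : ℕ) : ℚ) by push_cast; ring,
        show ((a:ℚ)+2) = ((a+2 : ℕ) : ℚ) by push_cast; ring,
        padicValRat.div (p := p) (by positivity) (by positivity),
        padicValRat.of_nat, padicValRat.of_nat,
        padicValNat.eq_zero_of_not_dvd hpa2]
      ring
    have hV1 : 1 ≤ padicValNat p (a+1) :=
      one_le_padicValNat_of_dvd (by omega) hpd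
    -- valuation of the relation
    have hval : padicValRat p (x ^ (-p₁) * y ^ (-p₂)) = 0 := by
      rw [hq1]; exact padicValRat.one
    rw [padicValRat.mul (zpow_ne_zero _ hx0) (zpow_ne_zero _ hy0),
      padicValRat_zpow hx0, padicValRat_zpow hy0, hvx, hvy] at hval
    have hp12 : p₁ = p₂ := by
      have : (p₁ - p₂) * (padicValNat p (a+1) : ℤ) = 0 := by linarith
      have h2 := mul_eq_zero.mp this
      rcases h2 with h2 | h2
      · omega
      · omega
    -- now p₁ * log (a/(a+2)) = 0
    subst hp12
    have hXY : X * Y = (a:ℝ)/((a:ℝ)+2) := by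
      rw [hXdef, hYdef]
      field_simp
    have hzw : (X*Y) ^ p₁ = 1 := by
      rw [mul_zpow]
      have h2 : (X ^ p₁ * Y ^ p₁)⁻¹ = 1 := by
        rw [← h1, mul_inv, ← zpow_neg, ← zpow_neg]
      rw [← inv_inv (X ^ p₁ * Y ^ p₁), h2, inv_one]
    have hlog : (p₁:ℝ) * Real.log (X*Y) = 0 := by
      rw [← Real.log_zpow, hzw, Real.log_one]
    have hXYlt : X*Y < 1 := by
      rw [hXY]
      rw [div_lt_one (by positivity)]
      linarith
    have hXYpos : 0 < X*Y := by positivity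
    have hlogneg : Real.log (X*Y) < 0 := Real.log_neg hXYpos hXYlt
    have hp1 : p₁ = 0 := by
      rcases mul_eq_zero.mp hlog with h2 | h2
      · exact_mod_cast h2
      · linarith
    exact hne ⟨rfl, hp1, hp1⟩
  · have hn : 0 < q.toNat := by omega
    refine irrational_exp_nat q.toNat hn ⟨x ^ (-p₁) * y ^ (-p₂), ?_⟩
    have ht : ((q.toNat : ℤ)) = q := Int.toNat_of_nonneg (by omega)
    have ht' : ((q.toNat : ℕ) : ℝ) = (q:ℝ) := by exact_mod_cast ht
    rw [hcastR, ht']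
    exact hexp.symm
end

section
/- Let I(n) := ∫₀¹ (x(1-x)/(1+x))ⁿ · dx/(1+x) and let dₙ := lcm(1,2,…,n). Then there exist sequences of rational numbers A(n) and B(n) such that I(n) = A(n) + B(n)·log 2 for all n ≥ 0, and such that dₙ·A(n) and dₙ·B(n) are integers for all n ≥ 1. -/
open Polynomial intervalIntegral

/-- The Alladi–Robinson integral `I(n) = ∫₀¹ (x(1-x)/(1+x))ⁿ dx/(1+x)`. -/
noncomputable def AR (n : ℕ) : ℝ :=
  ∫ x in (0:ℝ)..1, (x * (1 - x) / (1 + x)) ^ n / (1 + x)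

/-- `d(n) = lcm(1, 2, …, n)`. -/
def dd (n : ℕ) : ℕ := (Finset.Icc 1 n).lcm id

noncomputable def qq : ℤ[X] := (X - 1) * (2 - X)
noncomputable def aa (n k : ℕ) : ℤ := (qq ^ n).coeff k

lemma coeff_comp_C_mul_X (p : ℤ[X]) (a : ℤ) (k : ℕ) :
    (p.comp (C a * X)).coeff k = a ^ k * p.coeff k := by
  induction p using Polynomial.induction_on' with
  | add p q hp hq =>
      rw [add_comp, coeff_add, hp, hq, coeff_add, mul_add]
  | monomial n b =>
      rw [monomial_comp, mul_pow, ← C_pow]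
      rw [show C b * (C (a ^ n) * X ^ n) = C (b * a ^ n) * X ^ n by rw [C_mul]; ring]
      rw [coeff_C_mul_X_pow, coeff_monomial]
      rcases eq_or_ne n k with rfl | h
      · simp [mul_comm]
      · simp [h, Ne.symm h]

lemma qq_eq : qq = C (-1) * X ^ 2 + C 3 * X ^ 1 + C (-2) * X ^ 0 := by
  unfold qq
  ring_nf
  simp [C_eq_intCast]
  ring

lemma qq_base : qq.comp (C 2 * X) = C 2 * reflect 2 qq := by
  rw [qq_eq]
  simp only [reflect_add, reflect_C_mul_X_pow, add_comp, mul_comp, C_comp, X_comp, pow_comp]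
  norm_num [revAt_le]
  ring

lemma qq_deg : qq.natDegree ≤ 2 := by unfold qq; compute_degree

lemma qq_pow_deg (n : ℕ) : (qq ^ n).natDegree ≤ 2 * n := by
  calc (qq ^ n).natDegree ≤ n * qq.natDegree := natDegree_pow_le
  _ ≤ n * 2 := Nat.mul_le_mul_left n qq_deg
  _ = 2 * n := Nat.mul_comm n 2

lemma reflect_qq_pow (n : ℕ) : reflect (2 * n) (qq ^ n) = (reflect 2 qq) ^ n := by
  induction n with
  | zero => simp
  | succ m ih =>
      rw [pow_succ, pow_succ, show 2 * (m + 1) = 2 * m + 2 by ring,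
        reflect_mul (qq ^ m) qq (qq_pow_deg m) qq_deg, ih]

lemma qq_pow_comp (n : ℕ) :
    (qq ^ n).comp (C 2 * X) = C (2 ^ n) * reflect (2 * n) (qq ^ n) := by
  rw [pow_comp, qq_base, mul_pow, ← C_pow, reflect_qq_pow]

lemma coeff_sym (n t : ℕ) (ht : t ≤ n) :
    aa n (n - t) = 2 ^ t * aa n (n + t) := by
  unfold aa
  have h := congrArg (fun p => Polynomial.coeff p (n + t)) (qq_pow_comp n)
  simp only [coeff_comp_C_mul_X, coeff_C_mul, coeff_reflect] at h
  have hrev : revAt (2 * n) (n + t) = n - t := by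
    rw [revAt_le (by omega)]; omega
  rw [hrev] at h
  have h2 : (2:ℤ) ^ (n + t) = 2 ^ n * 2 ^ t := by rw [pow_add]
  rw [h2, mul_assoc] at h
  have := mul_left_cancel₀ (a := (2:ℤ)^n) (by positivity) h
  omega

lemma eval_sum (n : ℕ) (u : ℝ) :
    ((u - 1) * (2 - u)) ^ n = ∑ k ∈ Finset.range (2*n+1), (aa n k : ℝ) * u ^ k := by
  have h1 : ((u - 1) * (2 - u)) ^ n = ((qq ^ n).map (Int.castRingHom ℝ)).eval u := by
    simp [qq, Polynomial.eval_map, Polynomial.eval₂_pow]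
  rw [h1, Polynomial.eval_eq_sum_range' (n := 2*n+1)
    (lt_of_le_of_lt natDegree_map_le (by exact Nat.lt_succ_of_le (qq_pow_deg n)))]
  simp only [aa, ← Polynomial.map_pow, Polynomial.coeff_map, eq_intCast, mul_comm]

noncomputable def Jz (m : ℤ) : ℝ :=
  if m = -1 then Real.log 2 else ((2:ℝ) ^ (m+1) - 1) / (m+1)

lemma zpow_integrable (m : ℤ) :
    IntervalIntegrable (fun u : ℝ => u ^ m) MeasureTheory.volume 1 2 := by
  apply ContinuousOn.intervalIntegrable
  apply ContinuousOn.zpow₀ continuousOn_id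
  intro x hx
  left
  rw [Set.uIcc_of_le (by norm_num)] at hx
  exact ne_of_gt (lt_of_lt_of_le one_pos hx.1)

lemma integral_Jz (m : ℤ) : ∫ u in (1:ℝ)..2, u ^ m = Jz m := by
  unfold Jz
  split_ifs with h
  · subst h
    simp only [zpow_neg_one]
    rw [integral_inv (by rw [Set.uIcc_of_le (by norm_num)]; norm_num)]
    norm_num
  · rw [integral_zpow (Or.inr ⟨h, by rw [Set.uIcc_of_le (by norm_num)]; norm_num⟩)]
    norm_num

lemma AR_eq_sum (n : ℕ) :
    AR n = ∑ k ∈ Finset.range (2*n+1), (aa n k : ℝ) * Jz ((k : ℤ) - (n+1)) := by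
  have key : AR n = ∫ x in (0:ℝ)..1,
      (fun u : ℝ => ∑ k ∈ Finset.range (2*n+1), (aa n k : ℝ) * u ^ ((k : ℤ) - (n+1))) (1 + x) := by
    unfold AR
    apply intervalIntegral.integral_congr
    intro x hx
    rw [Set.uIcc_of_le (by norm_num)] at hx
    have hu : (0:ℝ) < 1 + x := by linarith [hx.1]
    simp only
    have h1 : (x * (1 - x) / (1 + x)) ^ n / (1 + x)
        = (((1+x) - 1) * (2 - (1+x))) ^ n / (1+x) ^ (n+1) := by
      rw [div_pow]
      rw [div_div, ← pow_succ]
      ring_nf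
    rw [h1, eval_sum, Finset.sum_div]
    apply Finset.sum_congr rfl
    intro k hk
    rw [mul_div_assoc]
    congr 1
    rw [← zpow_natCast (1+x) k, ← zpow_natCast (1+x) (n+1), ← zpow_sub₀ hu.ne']
    push_cast
    ring_nf
  rw [key, intervalIntegral.integral_comp_add_left
    (fun u : ℝ => ∑ k ∈ Finset.range (2*n+1), (aa n k : ℝ) * u ^ ((k : ℤ) - (n+1))) 1]
  norm_num
  rw [intervalIntegral.integral_finset_sum]
  · apply Finset.sum_congr rfl
    intro k hk
    rw [intervalIntegral.integral_const_mul, integral_Jz]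
  · intro k hk
    exact (zpow_integrable _).const_mul _

lemma sum_reorg (n : ℕ) (F : ℕ → ℝ) :
    ∑ k ∈ Finset.range (2*n+1), F k
      = F n + ∑ t ∈ Finset.Icc 1 n, (F (n - t) + F (n + t)) := by
  have hIcc : ∑ t ∈ Finset.Icc 1 n, (F (n - t) + F (n + t))
      = ∑ j ∈ Finset.range n, (F (n - (1 + j)) + F (n + (1 + j))) := by
    rw [← Finset.Ico_add_one_right_eq_Icc, Finset.sum_Ico_eq_sum_range]
    simp
  have h1 : ∑ k ∈ Finset.range (2*n+1), F k
      = ∑ k ∈ Finset.range n, F k + ∑ k ∈ Finset.Ico n (2*n+1), F k := by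
    simp only [Finset.range_eq_Ico]
    rw [← Finset.sum_Ico_consecutive F (Nat.zero_le n) (by omega)]
  have h2 : ∑ k ∈ Finset.Ico n (2*n+1), F k
      = F n + ∑ k ∈ Finset.Ico (n+1) (2*n+1), F k := by
    rw [Finset.sum_eq_sum_Ico_succ_bot (by omega)]
  have h3 : ∑ k ∈ Finset.Ico (n+1) (2*n+1), F k
      = ∑ j ∈ Finset.range n, F (n + (1 + j)) := by
    rw [Finset.sum_Ico_eq_sum_range]
    apply Finset.sum_congr (by congr 1; omega)
    intro j _; congr 1; omega
  have h4 : ∑ k ∈ Finset.range n, F k = ∑ j ∈ Finset.range n, F (n - (1 + j)) := by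
    rw [← Finset.sum_range_reflect]
    apply Finset.sum_congr rfl
    intro j _; congr 1; omega
  rw [h1, h2, h3, h4, hIcc, Finset.sum_add_distrib]
  ring

lemma AR_formula (n : ℕ) :
    AR n = (∑ t ∈ Finset.Icc 1 n, 2 * (aa n (n+t) : ℝ) * (2^t - 1) / t)
      + (aa n n : ℝ) * Real.log 2 := by
  rw [AR_eq_sum, sum_reorg n (fun k => (aa n k : ℝ) * Jz ((k : ℤ) - (n+1)))]
  have hn : ((n:ℤ) - (n+1)) = -1 := by ring
  rw [hn]
  rw [show Jz (-1) = Real.log 2 from if_pos rfl]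
  rw [add_comm]
  congr 1
  apply Finset.sum_congr rfl
  intro t ht
  rw [Finset.mem_Icc] at ht
  obtain ⟨ht1, ht2⟩ := ht
  have e1 : ((n + t : ℕ) : ℤ) - (n+1) = (t:ℤ) - 1 := by push_cast; ring
  have e2 : ((n - t : ℕ) : ℤ) - (n+1) = -((t:ℤ)+1) := by
    rw [Nat.cast_sub ht2]; ring
  rw [e1, e2, coeff_sym n t ht2]
  have j1 : Jz ((t:ℤ) - 1) = ((2:ℝ)^t - 1) / t := by
    unfold Jz
    rw [if_neg (by omega)]
    rw [show (t:ℤ) - 1 + 1 = (t:ℤ) by ring, zpow_natCast]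
    norm_num
  have j2 : Jz (-((t:ℤ)+1)) = ((2:ℝ)^(-(t:ℤ)) - 1) / (-(t:ℤ)) := by
    unfold Jz
    rw [if_neg (by omega)]
    norm_num
  rw [j1, j2]
  have ht0 : (0:ℝ) < (t:ℝ) := by exact_mod_cast ht1
  have hz : (2:ℝ) ^ (-(t:ℤ)) = ((2:ℝ)^t)⁻¹ := by
    rw [zpow_neg, zpow_natCast]
  push_cast
  rw [hz]
  have h2t : (0:ℝ) < 2^t := by positivity
  field_simp
  ring

theorem AR_rational_structure :
    ∃ A B : ℕ → ℚ,
      (∀ n : ℕ, AR n = (A n : ℝ) + (B n : ℝ) * Real.log 2) ∧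
      (∀ n : ℕ, 1 ≤ n → (∃ z : ℤ, (dd n : ℚ) * A n = z) ∧ (∃ z : ℤ, (dd n : ℚ) * B n = z)) := by
  refine ⟨fun n => ∑ t ∈ Finset.Icc 1 n, 2 * (aa n (n+t) : ℚ) * (2^t - 1) / t,
    fun n => (aa n n : ℚ), fun n => ?_, fun n hn => ⟨?_, ?_⟩⟩
  · rw [AR_formula n]
    push_cast
    ring
  · refine ⟨∑ t ∈ Finset.Icc 1 n, ((dd n / t : ℕ) : ℤ) * (2 * aa n (n+t) * (2^t - 1)), ?_⟩
    rw [Finset.mul_sum]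
    push_cast
    apply Finset.sum_congr rfl
    intro t ht
    rw [Finset.mem_Icc] at ht
    have htd : t ∣ dd n := Finset.dvd_lcm (by simpa [Finset.mem_Icc] using ht)
    have ht0 : (t:ℚ) ≠ 0 := by exact_mod_cast Nat.one_le_iff_ne_zero.mp ht.1
    push_cast [Nat.cast_div htd ht0]
    field_simp
    rw [Int.cast_div (Int.natCast_dvd_natCast.mpr htd) (by exact_mod_cast ht0)]
    push_cast
    field_simp
  · exact ⟨(dd n : ℤ) * aa n n, by push_cast; ring⟩
end

section
/- Let I(n) := ∫₀¹ (x(1-x)/(1+x))ⁿ · dx/(1+x). Then I(n) > 0 for all n and lim_{n→∞} (log I(n))/n = log(3 - 2√2). -/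
open Filter

private lemma hs2 : Real.sqrt 2 ^ 2 = 2 := Real.sq_sqrt (by norm_num)

private lemma hs_lt : Real.sqrt 2 < 3/2 := by
  nlinarith [hs2, Real.sqrt_nonneg 2]

private lemma hs_gt : 1 < Real.sqrt 2 := by
  nlinarith [hs2, Real.sqrt_nonneg 2]

private lemma M_pos : 0 < 3 - 2 * Real.sqrt 2 := by nlinarith [hs_lt]

private lemma f_le {x : ℝ} (hx : 0 ≤ x) :
    x * (1 - x) / (1 + x) ≤ 3 - 2 * Real.sqrt 2 := by
  rw [div_le_iff₀ (by linarith)]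
  nlinarith [sq_nonneg (x + 1 - Real.sqrt 2), hs2]

private lemma integ (n : ℕ) {a b : ℝ} (ha : 0 ≤ a) (hab : a ≤ b) :
    IntervalIntegrable (fun x : ℝ => (x * (1 - x) / (1 + x)) ^ n / (1 + x))
      MeasureTheory.volume a b := by
  apply ContinuousOn.intervalIntegrable
  rw [Set.uIcc_of_le hab]
  have hne : ∀ x ∈ Set.Icc a b, (1:ℝ) + x ≠ 0 := fun x hx => by
    have := hx.1; intro h; linarith
  exact ContinuousOn.div
    (((continuous_id.mul (continuous_const.sub continuous_id)).continuousOn.div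
      (continuous_const.add continuous_id).continuousOn hne).pow n)
    (continuous_const.add continuous_id).continuousOn hne

private lemma AR_pos (n : ℕ) : 0 < AR n := by
  apply intervalIntegral.intervalIntegral_pos_of_pos_on (integ n le_rfl zero_le_one)
  · intro x hx
    have h1 : (0:ℝ) < x * (1 - x) / (1 + x) :=
      div_pos (mul_pos hx.1 (by linarith [hx.2])) (by linarith [hx.1])
    exact div_pos (pow_pos h1 n) (by linarith [hx.1])
  · norm_num

private lemma AR_le (n : ℕ) : AR n ≤ (3 - 2 * Real.sqrt 2) ^ n := by
  have h : AR n ≤ ∫ _x in (0:ℝ)..1, (3 - 2 * Real.sqrt 2) ^ n := by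
    apply intervalIntegral.integral_mono_on zero_le_one (integ n le_rfl zero_le_one)
      intervalIntegrable_const
    intro x hx
    have hx0 : (0:ℝ) ≤ x := hx.1
    have hfnn : (0:ℝ) ≤ x * (1 - x) / (1 + x) :=
      div_nonneg (mul_nonneg hx0 (by linarith [hx.2])) (by linarith)
    have h1 : (x * (1 - x) / (1 + x)) ^ n ≤ (3 - 2 * Real.sqrt 2) ^ n :=
      pow_le_pow_left₀ hfnn (f_le hx0) n
    calc (x * (1 - x) / (1 + x)) ^ n / (1 + x)
        ≤ (x * (1 - x) / (1 + x)) ^ n := by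
          apply div_le_self (pow_nonneg hfnn n); linarith
      _ ≤ (3 - 2 * Real.sqrt 2) ^ n := h1
  simpa using h

private lemma f_at_a : (Real.sqrt 2 - 1) * (1 - (Real.sqrt 2 - 1)) / (1 + (Real.sqrt 2 - 1))
    = 3 - 2 * Real.sqrt 2 := by
  have h0 : (1:ℝ) + (Real.sqrt 2 - 1) ≠ 0 := by
    have := hs_gt; intro h; linarith
  rw [div_eq_iff h0]
  linear_combination hs2

private lemma AR_lower {c : ℝ} (hc : 0 < c) (hcM : c < 3 - 2 * Real.sqrt 2) :
    ∃ K : ℝ, 0 < K ∧ ∀ n : ℕ, K * c ^ n ≤ AR n := by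
  set a : ℝ := Real.sqrt 2 - 1 with ha
  have ha0 : 0 < a := by have := hs_gt; simp [ha]; linarith
  have ha1 : a < 1 := by have := hs_lt; simp [ha]; linarith
  have hcont : ContinuousAt (fun x : ℝ => x * (1 - x) / (1 + x)) a := by
    apply ContinuousAt.div (by fun_prop) (by fun_prop)
    intro h; linarith
  have hev : ∀ᶠ x in nhds a, c < x * (1 - x) / (1 + x) := by
    have hMa : c < (fun x : ℝ => x * (1 - x) / (1 + x)) a := by
      show c < a * (1 - a) / (1 + a)
      rw [ha, f_at_a]; exact hcM
    exact hcont.eventually_const_lt hMa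
  rw [Metric.eventually_nhds_iff] at hev
  obtain ⟨ε, hε, hball⟩ := hev
  set δ : ℝ := min (ε/2) (min (a/2) ((1-a)/2)) with hδdef
  have hδ : 0 < δ := by
    apply lt_min (by linarith) (lt_min (by linarith) (by linarith))
  have hδε : δ < ε := lt_of_le_of_lt (min_le_left _ _) (by linarith)
  have hsub0 : 0 ≤ a - δ := by
    have : δ ≤ a/2 := le_trans (min_le_right _ _) (min_le_left _ _)
    linarith
  have hsub1 : a + δ ≤ 1 := by
    have : δ ≤ (1-a)/2 := le_trans (min_le_right _ _) (min_le_right _ _)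
    linarith
  refine ⟨δ, hδ, fun n => ?_⟩
  have hfc : ∀ x ∈ Set.Icc (a - δ) (a + δ), c ^ n / 2 ≤ (x * (1 - x) / (1 + x)) ^ n / (1 + x) := by
    intro x hx
    have hd : dist x a < ε := by
      rw [Real.dist_eq, abs_lt]
      constructor <;> [linarith [hx.1, hδε]; linarith [hx.2, hδε]]
    have hcf : c < x * (1 - x) / (1 + x) := hball hd
    have hx0 : 0 ≤ x := by linarith [hx.1]
    have hx1 : x ≤ 1 := by linarith [hx.2]
    apply div_le_div₀ (pow_nonneg (le_trans hc.le hcf.le) n)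
      (pow_le_pow_left₀ hc.le hcf.le n) (by linarith) (by linarith)
  have h1 : δ * c ^ n = ∫ _x in (a - δ)..(a + δ), c ^ n / 2 := by
    rw [intervalIntegral.integral_const, smul_eq_mul]
    ring
  have h2 : (∫ _x in (a - δ)..(a + δ), c ^ n / 2)
      ≤ ∫ x in (a - δ)..(a + δ), (x * (1 - x) / (1 + x)) ^ n / (1 + x) := by
    apply intervalIntegral.integral_mono_on (by linarith) intervalIntegrable_const
      (integ n hsub0 (by linarith)) hfc
  have h3 : (∫ x in (a - δ)..(a + δ), (x * (1 - x) / (1 + x)) ^ n / (1 + x)) ≤ AR n := by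
    apply intervalIntegral.integral_mono_interval hsub0 (by linarith : a - δ ≤ a + δ) hsub1
      ?_ (integ n le_rfl zero_le_one)
    filter_upwards [MeasureTheory.ae_restrict_mem measurableSet_Ioc] with x hx
    have hx0 : 0 ≤ x := le_of_lt hx.1
    have hx1 : x ≤ 1 := hx.2
    exact div_nonneg (pow_nonneg (div_nonneg (mul_nonneg hx0 (by linarith)) (by linarith)) n)
      (by linarith)
  linarith [h2, h3, h1.le, h1.ge]

theorem AR_pos_and_decay :
    (∀ n : ℕ, 0 < AR n) ∧
    Tendsto (fun n : ℕ => Real.log (AR n) / (n : ℝ)) atTop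
      (nhds (Real.log (3 - 2 * Real.sqrt 2))) := by
  refine ⟨AR_pos, ?_⟩
  rw [tendsto_order]
  constructor
  · -- lower bound
    intro b hb
    set c : ℝ := Real.exp ((b + Real.log (3 - 2 * Real.sqrt 2)) / 2) with hcdef
    have hc : 0 < c := Real.exp_pos _
    have hlogc : Real.log c = (b + Real.log (3 - 2 * Real.sqrt 2)) / 2 := Real.log_exp _
    have hcM : c < 3 - 2 * Real.sqrt 2 := by
      have : c < Real.exp (Real.log (3 - 2 * Real.sqrt 2)) := by
        apply Real.exp_lt_exp.2; linarith
      rwa [Real.exp_log M_pos] at this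
    obtain ⟨K, hK, hKle⟩ := AR_lower hc hcM
    have hblog : b - Real.log c < 0 := by rw [hlogc]; linarith
    have htend : Tendsto (fun n : ℕ => Real.log K / (n : ℝ)) atTop (nhds 0) :=
      tendsto_const_div_atTop_nhds_zero_nat _
    filter_upwards [eventually_gt_atTop 0, htend.eventually (eventually_gt_nhds hblog)]
      with n hn hn2
    have hnpos : (0:ℝ) < (n : ℝ) := by exact_mod_cast hn
    have hlog1 : Real.log (K * c ^ n) ≤ Real.log (AR n) :=
      Real.log_le_log (by positivity) (hKle n)
    have hlog2 : Real.log (K * c ^ n) = Real.log K + n * Real.log c := by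
      rw [Real.log_mul (ne_of_gt hK) (by positivity), Real.log_pow]
    have hdiv : (Real.log K + (n : ℝ) * Real.log c) / n ≤ Real.log (AR n) / n :=
      (div_le_div_iff_of_pos_right hnpos).2 (hlog2 ▸ hlog1)
    have heq : (Real.log K + (n : ℝ) * Real.log c) / n = Real.log K / n + Real.log c := by
      field_simp
    linarith [hdiv, heq.le, heq.ge, hn2]
  · intro b hb
    filter_upwards [eventually_gt_atTop 0] with n hn
    have hnpos : (0:ℝ) < (n : ℝ) := by exact_mod_cast hn
    have h1 : Real.log (AR n) ≤ (n : ℝ) * Real.log (3 - 2 * Real.sqrt 2) := by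
      have := Real.log_le_log (AR_pos n) (AR_le n)
      rwa [Real.log_pow] at this
    have : Real.log (AR n) / n ≤ Real.log (3 - 2 * Real.sqrt 2) := by
      rw [div_le_iff₀ hnpos]; linarith [h1]
    linarith
end

section
/- Define the Apéry sequence aₙ := Σ_{k=0}^{n} C(n,k)²·C(n+k,k)²·( Σ_{m=1}^{n} 1/m³ + Σ_{m=1}^{k} (-1)^{m-1}/(2·m³·C(n,m)·C(n+m,m)) ), where C(n,k) denotes the binomial coefficient, and let dₙ := lcm(1,2,…,n). Then dₙ³·aₙ is an integer for every n ≥ 1. -/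
/-- The Apéry sequence `aₙ`. -/
def aperyA (n : ℕ) : ℚ :=
  ∑ k ∈ Finset.range (n + 1),
    (Nat.choose n k : ℚ) ^ 2 * (Nat.choose (n + k) k : ℚ) ^ 2 *
      ((∑ m ∈ Finset.Icc 1 n, 1 / (m : ℚ) ^ 3) +
       (∑ m ∈ Finset.Icc 1 k,
          (-1 : ℚ) ^ (m - 1) /
            (2 * (m : ℚ) ^ 3 * (Nat.choose n m : ℚ) * (Nat.choose (n + m) m : ℚ))))

open Finset Nat


lemma dd_pos (n : ℕ) : 0 < dd n := by
  apply Nat.pos_of_ne_zero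
  rw [dd, Ne, Finset.lcm_eq_zero_iff]
  simp only [Set.mem_image, id_eq, Finset.mem_coe, Finset.mem_Icc]
  rintro ⟨x, ⟨h1, h2⟩, rfl⟩
  omega

lemma dvd_dd {m n : ℕ} (h1 : 1 ≤ m) (h2 : m ≤ n) : m ∣ dd n :=
  Finset.dvd_lcm (by simp [Finset.mem_Icc, h1, h2])

lemma mul_choose_dvd_dd {m k n : ℕ} (hm : 1 ≤ m) (hmk : m ≤ k) (hkn : k ≤ n) :
    m * k.choose m ∣ dd n := by
  have hk1 : 1 ≤ k := hm.trans hmk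
  have hne : m * k.choose m ≠ 0 := by
    have := Nat.choose_pos hmk; positivity
  have hdd : dd n ≠ 0 := (dd_pos n).ne'
  rw [← Nat.factorization_le_iff_dvd hne hdd]
  intro p
  by_cases hp : p.Prime
  · haveI : Fact p.Prime := ⟨hp⟩
    set t := m.factorization p with ht
    set L := Nat.log p k with hL
    have htL : t ≤ L := by
      have h1 : p ^ t ≤ m := Nat.ordProj_le p (by omega)
      exact (Nat.le_log_iff_pow_le hp.one_lt (by omega)).mpr (h1.trans hmk)
    have hchoose : (k.choose m).factorization p ≤ L - t := by
      rw [Nat.factorization_def _ hp,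
        padicValNat_choose hmk (Nat.lt_succ_self L)]
      have hsub : (Finset.Ico 1 (L+1)).filter
          (fun i => p ^ i ≤ m % p ^ i + (k - m) % p ^ i) ⊆ Finset.Ico (t+1) (L+1) := by
        intro i hi
        simp only [Finset.mem_filter, Finset.mem_Ico] at hi ⊢
        refine ⟨?_, hi.1.2⟩
        by_contra hit
        push_neg at hit
        have hdvd : p ^ i ∣ m := dvd_trans (pow_dvd_pow p (by omega)) (Nat.ordProj_dvd m p)
        have h0 : m % p ^ i = 0 := Nat.eq_zero_of_dvd_of_lt ((Nat.dvd_mod_iff dvd_rfl).mpr hdvd) (Nat.mod_lt _ (pow_pos hp.pos i))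
        have h1 : (k - m) % p ^ i < p ^ i := Nat.mod_lt _ (pow_pos hp.pos i)
        omega
      calc _ ≤ (Finset.Ico (t+1) (L+1)).card := Finset.card_le_card hsub
        _ = L - t := by rw [Nat.card_Ico]; omega
    have hddf : L ≤ (dd n).factorization p := by
      rw [← Nat.Prime.pow_dvd_iff_le_factorization hp hdd]
      exact dvd_trans (dvd_dd (Nat.one_le_pow _ _ hp.pos)
        ((Nat.pow_log_le_self p (by omega)).trans hkn)) dvd_rfl
    rw [Nat.factorization_mul (by omega) (Nat.choose_pos hmk).ne']
    simp only [Finsupp.coe_add, Pi.add_apply]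
    omega
  · simp [Nat.factorization_eq_zero_of_not_prime _ hp]


lemma central_even (k : ℕ) (hk : 1 ≤ k) : 2 ∣ (2 * k).choose k := by
  obtain ⟨j, rfl⟩ := Nat.exists_eq_add_of_le hk
  have h : 2 * (1 + j) = (2 * j + 1) + 1 := by ring
  rw [h, show 1 + j = j + 1 from by ring, Nat.choose_succ_succ]
  rw [Nat.choose_symm_half j]
  omega

lemma two_dvd_P {n k : ℕ} (hk : 1 ≤ k) (hkn : k ≤ n) :
    2 ∣ n.choose k * (n + k).choose k := by
  have h := Nat.choose_mul (n := n + k) (k := 2 * k) (s := k) (by omega)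
  have h2 : (n + k) - k = n := by omega
  have h3 : 2 * k - k = k := by omega
  rw [h2, h3] at h
  have : (2 * k).choose k ∣ n.choose k * (n + k).choose k := by
    rw [mul_comm (n.choose k)]
    exact ⟨(n + k).choose (2 * k), by rw [← h]; ring⟩
  exact dvd_trans (central_even k hk) this

lemma key_dvd {n k m : ℕ} (hm : 1 ≤ m) (hmk : m ≤ k) (hkn : k ≤ n) :
    2 * m ^ 3 * n.choose m * (n + m).choose m ∣
      dd n ^ 3 * (n.choose k) ^ 2 * ((n + k).choose k) ^ 2 := by
  set c := k.choose m with hc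
  have hc0 : c ≠ 0 := (Nat.choose_pos hmk).ne'
  rw [← mul_dvd_mul_iff_right (pow_ne_zero 2 hc0)]
  -- identities
  have I1 : n.choose k * c = n.choose m * (n - m).choose (k - m) :=
    Nat.choose_mul hmk
  have I2 : (n + k).choose k * c = (n + m).choose m * (n + k).choose (k - m) := by
    have h := Nat.choose_mul (n := n + k) (k := k) (s := k - m) (by omega)
    have e1 : k.choose (k - m) = c := by rw [hc, Nat.choose_symm hmk]
    have e2 : (n + k) - (k - m) = n + m := by omega
    have e3 : k - (k - m) = m := by omega
    rw [e1, e2, e3] at h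
    rw [h]; ring
  have hiden : dd n ^ 3 * (n.choose k) ^ 2 * ((n + k).choose k) ^ 2 * c ^ 2 =
      (n.choose m * (n + m).choose m) *
        (dd n ^ 3 * (n.choose k * (n + k).choose k) *
          ((n - m).choose (k - m) * (n + k).choose (k - m))) := by
    have : dd n ^ 3 * (n.choose k) ^ 2 * ((n + k).choose k) ^ 2 * c ^ 2 =
        dd n ^ 3 * (n.choose k * (n + k).choose k) *
          ((n.choose k * c) * ((n + k).choose k * c)) := by ring
    rw [this, I1, I2]; ring
  rw [hiden]
  have h2 : 2 * m ^ 3 * n.choose m * (n + m).choose m * c ^ 2 =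
      (n.choose m * (n + m).choose m) * (2 * (m * (m * c) ^ 2)) := by ring
  rw [h2]
  apply mul_dvd_mul_left
  have hdd3 : dd n ^ 3 = dd n * dd n ^ 2 := by ring
  have hstep : 2 * (m * (m * c) ^ 2) ∣
      (n.choose k * (n + k).choose k) * (dd n * dd n ^ 2) :=
    mul_dvd_mul (two_dvd_P (by omega) hkn)
      (mul_dvd_mul (dvd_dd hm (by omega)) (pow_dvd_pow_of_dvd (mul_choose_dvd_dd hm hmk hkn) 2))
  calc 2 * (m * (m * c) ^ 2)
      ∣ (n.choose k * (n + k).choose k) * (dd n * dd n ^ 2) := hstep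
    _ ∣ dd n ^ 3 * (n.choose k * (n + k).choose k) *
          ((n - m).choose (k - m) * (n + k).choose (k - m)) :=
        ⟨(n - m).choose (k - m) * (n + k).choose (k - m), by ring⟩

theorem apery_denominator (n : ℕ) (hn : 1 ≤ n) :
    ∃ z : ℤ, (dd n : ℚ) ^ 3 * aperyA n = z := by
  have key : (dd n : ℚ) ^ 3 * aperyA n ∈ (Int.castRingHom ℚ).range := by
    rw [aperyA, Finset.mul_sum]
    refine Subring.sum_mem _ fun k hk => ?_
    rw [Finset.mem_range] at hk
    have hkn : k ≤ n := by omega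
    rw [mul_add, mul_add]
    refine Subring.add_mem _ ?_ ?_
    · rw [Finset.mul_sum, Finset.mul_sum]
      refine Subring.sum_mem _ fun m hm => ?_
      rw [Finset.mem_Icc] at hm
      obtain ⟨q, hqq⟩ := dvd_dd hm.1 hm.2
      have hm0 : (m : ℚ) ≠ 0 := by exact_mod_cast (by omega : m ≠ 0)
      refine ⟨((n.choose k) ^ 2 * ((n + k).choose k) ^ 2 * q ^ 3 : ℕ), ?_⟩
      have hddq : (dd n : ℚ) = (m : ℚ) * (q : ℚ) := by exact_mod_cast congrArg Nat.cast hqq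
      simp only [Int.coe_castRingHom, Int.cast_natCast]
      push_cast
      rw [hddq]
      field_simp
    · rw [Finset.mul_sum, Finset.mul_sum]
      refine Subring.sum_mem _ fun m hm => ?_
      rw [Finset.mem_Icc] at hm
      set E : ℕ := 2 * m ^ 3 * n.choose m * (n + m).choose m with hE
      set D : ℕ := dd n ^ 3 * (n.choose k) ^ 2 * ((n + k).choose k) ^ 2 with hD
      have hED : E ∣ D := key_dvd hm.1 hm.2 hkn
      have hE0 : (E : ℚ) ≠ 0 := by
        have h1 := Nat.choose_pos (show m ≤ n by omega)
        have h2 := Nat.choose_pos (show m ≤ n + m by omega)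
        have : 0 < E := by
          apply Nat.mul_pos (Nat.mul_pos (Nat.mul_pos two_pos (pow_pos (by omega) 3)) h1) h2
        exact_mod_cast this.ne'
      obtain ⟨Q, hQ⟩ := hED
      refine ⟨(-1) ^ (m - 1) * (Q : ℤ), ?_⟩
      have hQQ : (D : ℚ) = (E : ℚ) * (Q : ℚ) := by exact_mod_cast congrArg Nat.cast hQ
      rw [hD, hE] at hQQ
      push_cast at hQQ
      have hm0 : (m : ℚ) ≠ 0 := by exact_mod_cast (by omega : m ≠ 0)
      have hc3 : ((n.choose m : ℕ) : ℚ) ≠ 0 := by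
        exact_mod_cast (Nat.choose_pos (show m ≤ n by omega)).ne'
      have hc4 : (((n + m).choose m : ℕ) : ℚ) ≠ 0 := by
        exact_mod_cast (Nat.choose_pos (show m ≤ n + m by omega)).ne'
      simp only [Int.coe_castRingHom]
      push_cast
      field_simp
      linear_combination (-1 : ℚ) * hQQ
  obtain ⟨z, hz⟩ := key
  exact ⟨z, hz.symm⟩
end

section
/- Let J(n) := ∫₀¹∫₀¹∫₀¹ ( x(1-x)y(1-y)z(1-z)/(1-(1-xy)z) )ⁿ · dx dy dz/(1-(1-xy)z). Then J(n) > 0 for all n and limsup_{n→∞} (log J(n))/n ≤ 4·log(√2 - 1). -/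
open MeasureTheory Filter

/-- Beukers' triple integral `J(n)` over the open unit cube. -/
noncomputable def beukersJ (n : ℕ) : ℝ :=
  ∫ x in Set.Ioo (0:ℝ) 1, ∫ y in Set.Ioo (0:ℝ) 1, ∫ z in Set.Ioo (0:ℝ) 1,
    (x * (1 - x) * y * (1 - y) * z * (1 - z) / (1 - (1 - x * y) * z)) ^ n /
      (1 - (1 - x * y) * z)

namespace BeukersAux

open Set

noncomputable def pfun (t : ℝ) : ℝ := (Real.sqrt t)⁻¹ * (Real.sqrt (1 - t))⁻¹

theorem pfun_nonneg (t : ℝ) : 0 ≤ pfun t := by unfold pfun; positivity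

theorem pfun_integrable : IntegrableOn pfun (Ioo (0:ℝ) 1) := by
  have h1 : IntegrableOn (fun t : ℝ => t ^ (-(1/2) : ℝ)) (Ioo (0:ℝ) 1) := by
    have := intervalIntegral.intervalIntegrable_rpow' (a := 0) (b := 1)
      (r := -(1/2)) (by norm_num)
    rw [intervalIntegrable_iff_integrableOn_Ioc_of_le (by norm_num)] at this
    exact this.mono_set Ioo_subset_Ioc_self
  have h2 : IntegrableOn (fun t : ℝ => (1 - t) ^ (-(1/2) : ℝ)) (Ioo (0:ℝ) 1) := by
    have := ((intervalIntegral.intervalIntegrable_rpow' (a := 0) (b := 1)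
      (r := -(1/2)) (by norm_num)).comp_sub_left 1).symm
    simp only [sub_zero, sub_self] at this
    rw [intervalIntegrable_iff_integrableOn_Ioc_of_le (by norm_num)] at this
    exact this.mono_set Ioo_subset_Ioc_self
  have hmaj : IntegrableOn
      (fun t : ℝ => Real.sqrt 2 * (t ^ (-(1/2) : ℝ) + (1 - t) ^ (-(1/2) : ℝ)))
      (Ioo (0:ℝ) 1) := ((h1.add h2).const_mul _)
  apply hmaj.mono'
  · apply Measurable.aestronglyMeasurable
    unfold pfun
    fun_prop
  · rw [ae_restrict_iff' measurableSet_Ioo]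
    filter_upwards with t ht
    obtain ⟨ht0, ht1⟩ := ht
    have hs0 : 0 < Real.sqrt t := Real.sqrt_pos.2 ht0
    have hs1 : 0 < Real.sqrt (1 - t) := Real.sqrt_pos.2 (by linarith)
    have e1 : t ^ (-(1/2) : ℝ) = (Real.sqrt t)⁻¹ := by
      rw [Real.rpow_neg ht0.le, Real.sqrt_eq_rpow]
    have e2 : (1 - t) ^ (-(1/2) : ℝ) = (Real.sqrt (1 - t))⁻¹ := by
      rw [Real.rpow_neg (by linarith), Real.sqrt_eq_rpow]
    rw [Real.norm_eq_abs, abs_of_nonneg (pfun_nonneg t), e1, e2]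
    unfold pfun
    have h2pos : 0 < Real.sqrt 2 := Real.sqrt_pos.2 (by norm_num)
    set a := (Real.sqrt t)⁻¹
    set b := (Real.sqrt (1 - t))⁻¹
    have ha0 : 0 < a := by positivity
    have hb0 : 0 < b := by positivity
    rcases le_total t (1/2) with hc | hc
    · have key : b ≤ Real.sqrt 2 := by
        rw [inv_le_comm₀ hs1 h2pos, ← Real.sqrt_inv]
        exact Real.sqrt_le_sqrt (by linarith)
      calc a * b ≤ a * Real.sqrt 2 := mul_le_mul_of_nonneg_left key ha0.le
        _ ≤ Real.sqrt 2 * (a + b) := by nlinarith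
    · have key : a ≤ Real.sqrt 2 := by
        rw [inv_le_comm₀ hs0 h2pos, ← Real.sqrt_inv]
        exact Real.sqrt_le_sqrt (by linarith)
      calc a * b ≤ Real.sqrt 2 * b := mul_le_mul_of_nonneg_right key hb0.le
        _ ≤ Real.sqrt 2 * (a + b) := by nlinarith

noncomputable def cconst : ℝ := (Real.sqrt 2 - 1) ^ 4

theorem sqrt2_gt : 1 < Real.sqrt 2 := by
  nlinarith [Real.sq_sqrt (by norm_num : (0:ℝ) ≤ 2), Real.sqrt_nonneg 2]

theorem cconst_pos : 0 < cconst := pow_pos (by linarith [sqrt2_gt]) 4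

noncomputable def Kp : ℝ := ∫ t in Ioo (0:ℝ) 1, pfun t

theorem Kp_nonneg : 0 ≤ Kp :=
  setIntegral_nonneg measurableSet_Ioo fun t _ => pfun_nonneg t

noncomputable def gfun (n : ℕ) (x y z : ℝ) : ℝ :=
  (x * (1 - x) * y * (1 - y) * z * (1 - z) / (1 - (1 - x * y) * z)) ^ n /
      (1 - (1 - x * y) * z)

theorem D_pos {x y z : ℝ} (hx : x ∈ Ioo (0:ℝ) 1) (hy : y ∈ Ioo (0:ℝ) 1)
    (hz : z ∈ Ioo (0:ℝ) 1) : 0 < 1 - (1 - x * y) * z := by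
  obtain ⟨hx0, hx1⟩ := hx; obtain ⟨hy0, hy1⟩ := hy; obtain ⟨hz0, hz1⟩ := hz
  nlinarith [mul_pos hx0 hy0, mul_pos (mul_pos hx0 hy0) hz0]

theorem N_nonneg {x y z : ℝ} (hx : x ∈ Ioo (0:ℝ) 1) (hy : y ∈ Ioo (0:ℝ) 1)
    (hz : z ∈ Ioo (0:ℝ) 1) : 0 ≤ x * (1 - x) * y * (1 - y) * z * (1 - z) := by
  obtain ⟨hx0, hx1⟩ := hx; obtain ⟨hy0, hy1⟩ := hy; obtain ⟨hz0, hz1⟩ := hz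
  have h1x : (0:ℝ) ≤ 1 - x := by linarith
  have h1y : (0:ℝ) ≤ 1 - y := by linarith
  have h1z : (0:ℝ) ≤ 1 - z := by linarith
  exact mul_nonneg (mul_nonneg (mul_nonneg (mul_nonneg (mul_nonneg hx0.le h1x)
    hy0.le) h1y) hz0.le) h1z

theorem gfun_nonneg (n : ℕ) {x y z : ℝ} (hx : x ∈ Ioo (0:ℝ) 1) (hy : y ∈ Ioo (0:ℝ) 1)
    (hz : z ∈ Ioo (0:ℝ) 1) : 0 ≤ gfun n x y z := by
  have hD := D_pos hx hy hz
  have hN := N_nonneg hx hy hz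
  exact div_nonneg (pow_nonneg (div_nonneg hN hD.le) n) hD.le

theorem f_le_cconst {x y z : ℝ} (hx : x ∈ Ioo (0:ℝ) 1) (hy : y ∈ Ioo (0:ℝ) 1)
    (hz : z ∈ Ioo (0:ℝ) 1) :
    x * (1 - x) * y * (1 - y) * z * (1 - z) / (1 - (1 - x * y) * z) ≤ cconst := by
  have hD := D_pos hx hy hz
  obtain ⟨hx0, hx1⟩ := hx; obtain ⟨hy0, hy1⟩ := hy; obtain ⟨hz0, hz1⟩ := hz
  set s := Real.sqrt (x*y) with hs
  have hs2 : s^2 = x*y := Real.sq_sqrt (by positivity)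
  have hs0 : 0 < s := Real.sqrt_pos.2 (by positivity)
  have hs1 : s < 1 := by
    rw [show (1:ℝ) = Real.sqrt 1 by simp]
    exact Real.sqrt_lt_sqrt (by positivity) (by nlinarith)
  have h2gt : 1 < Real.sqrt 2 := sqrt2_gt
  set a := (Real.sqrt 2 - 1)^2 with ha
  have ha0 : 0 < a := pow_pos (by linarith) 2
  have h1 : z*(1-z)*(1+s)^2 ≤ 1 - (1 - x*y)*z := by
    nlinarith [sq_nonneg (s*z - (1-z))]
  have h2 : x*(1-x)*y*(1-y) ≤ s^2*(1-s)^2 := by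
    have hmul : Real.sqrt x * Real.sqrt y = s := (Real.sqrt_mul hx0.le y).symm
    have hxy : 2*s ≤ x + y := by
      nlinarith [sq_nonneg (Real.sqrt x - Real.sqrt y), Real.sq_sqrt hx0.le,
        Real.sq_sqrt hy0.le]
    nlinarith [mul_pos hx0 hy0]
  have h2sq : Real.sqrt 2 ^ 2 = 2 := Real.sq_sqrt (by norm_num)
  have h3 : s*(1-s) ≤ a*(1+s) := by nlinarith [sq_nonneg (s - (Real.sqrt 2 - 1)), h2sq]
  have h3' : s^2*(1-s)^2 ≤ a^2*(1+s)^2 := by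
    nlinarith [mul_pos hs0 (by linarith : (0:ℝ) < 1-s), mul_pos ha0 (by linarith : (0:ℝ) < 1+s)]
  rw [div_le_iff₀ hD]
  have hz' : (0:ℝ) ≤ z*(1-z) := by nlinarith
  calc x*(1-x)*y*(1-y)*z*(1-z) = (x*(1-x)*y*(1-y)) * (z*(1-z)) := by ring
    _ ≤ (a^2*(1+s)^2) * (z*(1-z)) := mul_le_mul_of_nonneg_right (h2.trans h3') hz'
    _ = a^2 * (z*(1-z)*(1+s)^2) := by ring
    _ ≤ a^2 * (1 - (1-x*y)*z) := mul_le_mul_of_nonneg_left h1 (sq_nonneg a)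
    _ = cconst * (1 - (1-x*y)*z) := by rw [ha]; unfold cconst; ring

theorem Dinv_le {x y z : ℝ} (hx : x ∈ Ioo (0:ℝ) 1) (hy : y ∈ Ioo (0:ℝ) 1)
    (hz : z ∈ Ioo (0:ℝ) 1) :
    (1 - (1 - x * y) * z)⁻¹ ≤ pfun x * pfun y * pfun z := by
  have hD := D_pos hx hy hz
  obtain ⟨hx0, hx1⟩ := hx; obtain ⟨hy0, hy1⟩ := hy; obtain ⟨hz0, hz1⟩ := hz
  set P := Real.sqrt x * Real.sqrt (1-x) * Real.sqrt y * Real.sqrt (1-y) * Real.sqrt (1-z)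
    with hPdef
  have hP0 : 0 < P := by
    apply mul_pos; apply mul_pos; apply mul_pos; apply mul_pos
    all_goals exact Real.sqrt_pos.2 (by linarith)
  have hP2 : P^2 = x*(1-x)*y*(1-y)*(1-z) := by
    rw [hPdef]
    rw [mul_pow, mul_pow, mul_pow, mul_pow,
      Real.sq_sqrt hx0.le, Real.sq_sqrt (by linarith : (0:ℝ) ≤ 1-x),
      Real.sq_sqrt hy0.le, Real.sq_sqrt (by linarith : (0:ℝ) ≤ 1-y),
      Real.sq_sqrt (by linarith : (0:ℝ) ≤ 1-z)]
  have hsq : P^2 ≤ (1 - (1-x*y)*z)^2 := by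
    rw [hP2]
    nlinarith [sq_nonneg (x*y - (1-x*y)*(1-z)),
      mul_nonneg (mul_nonneg (mul_pos hx0 hy0).le
        (by nlinarith : (0:ℝ) ≤ x+y-2*x*y)) (by linarith : (0:ℝ) ≤ 1-z),
      mul_nonneg (mul_nonneg (mul_nonneg (mul_nonneg hx0.le (by linarith : (0:ℝ) ≤ 1-x)) hy0.le)
        (by linarith : (0:ℝ) ≤ 1-y)) (by linarith : (0:ℝ) ≤ 1-z)]
  have hPD : P ≤ 1 - (1-x*y)*z := by
    have := Real.sqrt_le_sqrt hsq
    rwa [Real.sqrt_sq hP0.le, Real.sqrt_sq hD.le] at this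
  have h1 : (1 - (1-x*y)*z)⁻¹ ≤ P⁻¹ := inv_anti₀ hP0 hPD
  refine h1.trans ?_
  have hz1' : (1:ℝ) ≤ (Real.sqrt z)⁻¹ := by
    rw [le_inv_comm₀ one_pos (Real.sqrt_pos.2 hz0)]
    simpa using Real.sqrt_le_one.mpr hz1.le
  have expand : P⁻¹ = pfun x * pfun y * (1 * (Real.sqrt (1-z))⁻¹) := by
    rw [hPdef]; simp [pfun, mul_inv]; ring
  rw [expand]
  apply mul_le_mul_of_nonneg_left
  · exact mul_le_mul_of_nonneg_right hz1' (by positivity)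
  · have : 0 < pfun x * pfun y := by
      apply mul_pos <;> · apply mul_pos <;> · rw [inv_pos]; exact Real.sqrt_pos.2 (by linarith)
    linarith

theorem gfun_le (n : ℕ) {x y z : ℝ} (hx : x ∈ Ioo (0:ℝ) 1) (hy : y ∈ Ioo (0:ℝ) 1)
    (hz : z ∈ Ioo (0:ℝ) 1) :
    gfun n x y z ≤ cconst ^ n * (pfun x * pfun y * pfun z) := by
  have hD := D_pos hx hy hz
  have hN := N_nonneg hx hy hz
  have hf0 : 0 ≤ x * (1 - x) * y * (1 - y) * z * (1 - z) / (1 - (1 - x * y) * z) :=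
    div_nonneg hN hD.le
  have hfn : (x * (1 - x) * y * (1 - y) * z * (1 - z) / (1 - (1 - x * y) * z)) ^ n
      ≤ cconst ^ n := pow_le_pow_left₀ hf0 (f_le_cconst hx hy hz) n
  unfold gfun
  rw [div_eq_mul_inv]
  exact mul_le_mul hfn (Dinv_le hx hy hz) (inv_nonneg.2 hD.le) (pow_nonneg cconst_pos.le n)

theorem gfun_lower (n : ℕ) {x y z : ℝ} (hx : x ∈ Ioo (1/4:ℝ) (1/2)) (hy : y ∈ Ioo (1/4:ℝ) (1/2))
    (hz : z ∈ Ioo (1/4:ℝ) (1/2)) : ((512:ℝ)⁻¹) ^ n ≤ gfun n x y z := by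
  obtain ⟨hx0, hx1⟩ := hx; obtain ⟨hy0, hy1⟩ := hy; obtain ⟨hz0, hz1⟩ := hz
  have hxy : (0:ℝ) < x * y := mul_pos (by linarith) (by linarith)
  have hxy1 : x * y < 1 := by nlinarith
  have hD : 0 < 1 - (1 - x * y) * z := by nlinarith
  have hD1 : 1 - (1 - x * y) * z ≤ 1 := by nlinarith [mul_nonneg (by linarith : (0:ℝ) ≤ 1 - x*y) (by linarith : (0:ℝ) ≤ z)]
  have l1 : (1:ℝ)/8 ≤ x*(1-x) := by nlinarith
  have l2 : (1:ℝ)/8 ≤ y*(1-y) := by nlinarith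
  have l3 : (1:ℝ)/8 ≤ z*(1-z) := by nlinarith
  have l23 : (1:ℝ)/64 ≤ (y*(1-y))*(z*(1-z)) := by nlinarith
  have hN : (512:ℝ)⁻¹ ≤ x * (1 - x) * y * (1 - y) * z * (1 - z) := by nlinarith
  have hf : (512:ℝ)⁻¹ ≤ x * (1 - x) * y * (1 - y) * z * (1 - z) / (1 - (1 - x * y) * z) := by
    rw [le_div_iff₀ hD]
    nlinarith
  have hfn : ((512:ℝ)⁻¹) ^ n ≤
      (x * (1 - x) * y * (1 - y) * z * (1 - z) / (1 - (1 - x * y) * z)) ^ n :=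
    pow_le_pow_left₀ (by norm_num) hf n
  have hfn0 : (0:ℝ) ≤ (x * (1 - x) * y * (1 - y) * z * (1 - z) / (1 - (1 - x * y) * z)) ^ n :=
    le_trans (by positivity) hfn
  unfold gfun
  refine hfn.trans ?_
  rw [le_div_iff₀ hD]
  nlinarith

theorem gfun_meas (n : ℕ) : Measurable (fun q : (ℝ × ℝ) × ℝ => gfun n q.1.1 q.1.2 q.2) := by
  unfold gfun; fun_prop

noncomputable def G1 (n : ℕ) (x y : ℝ) : ℝ := ∫ z in Ioo (0:ℝ) 1, gfun n x y z
noncomputable def G2 (n : ℕ) (x : ℝ) : ℝ := ∫ y in Ioo (0:ℝ) 1, G1 n x y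

theorem G1_sm (n : ℕ) : StronglyMeasurable (fun q : ℝ × ℝ => G1 n q.1 q.2) :=
  (gfun_meas n).stronglyMeasurable.integral_prod_right'

theorem G2_sm (n : ℕ) : StronglyMeasurable (G2 n) := (G1_sm n).integral_prod_right'

theorem Iz (n : ℕ) {x y : ℝ} (hx : x ∈ Ioo (0:ℝ) 1) (hy : y ∈ Ioo (0:ℝ) 1) :
    IntegrableOn (fun z => gfun n x y z) (Ioo (0:ℝ) 1) := by
  apply (pfun_integrable.const_mul (cconst ^ n * (pfun x * pfun y))).mono'
  · apply Measurable.aestronglyMeasurable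
    unfold gfun; fun_prop
  · rw [ae_restrict_iff' measurableSet_Ioo]
    filter_upwards with z hz
    rw [Real.norm_eq_abs, abs_of_nonneg (gfun_nonneg n hx hy hz)]
    calc gfun n x y z ≤ cconst ^ n * (pfun x * pfun y * pfun z) := gfun_le n hx hy hz
      _ = cconst ^ n * (pfun x * pfun y) * pfun z := by ring

theorem G1_nonneg (n : ℕ) {x y : ℝ} (hx : x ∈ Ioo (0:ℝ) 1) (hy : y ∈ Ioo (0:ℝ) 1) :
    0 ≤ G1 n x y :=
  setIntegral_nonneg measurableSet_Ioo fun z hz => gfun_nonneg n hx hy hz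

theorem G1_le (n : ℕ) {x y : ℝ} (hx : x ∈ Ioo (0:ℝ) 1) (hy : y ∈ Ioo (0:ℝ) 1) :
    G1 n x y ≤ cconst ^ n * (pfun x * pfun y) * Kp := by
  have h : G1 n x y ≤ ∫ z in Ioo (0:ℝ) 1, cconst ^ n * (pfun x * pfun y) * pfun z := by
    apply setIntegral_mono_on (Iz n hx hy) (pfun_integrable.const_mul _) measurableSet_Ioo
    intro z hz
    calc gfun n x y z ≤ cconst ^ n * (pfun x * pfun y * pfun z) := gfun_le n hx hy hz
      _ = cconst ^ n * (pfun x * pfun y) * pfun z := by ring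
  rwa [integral_const_mul] at h

theorem Iy (n : ℕ) {x : ℝ} (hx : x ∈ Ioo (0:ℝ) 1) :
    IntegrableOn (fun y => G1 n x y) (Ioo (0:ℝ) 1) := by
  apply (pfun_integrable.const_mul (cconst ^ n * pfun x * Kp)).mono'
  · exact ((G1_sm n).comp_measurable (measurable_prodMk_left)).aestronglyMeasurable
  · rw [ae_restrict_iff' measurableSet_Ioo]
    filter_upwards with y hy
    rw [Real.norm_eq_abs, abs_of_nonneg (G1_nonneg n hx hy)]
    calc G1 n x y ≤ cconst ^ n * (pfun x * pfun y) * Kp := G1_le n hx hy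
      _ = cconst ^ n * pfun x * Kp * pfun y := by ring

theorem G2_nonneg (n : ℕ) {x : ℝ} (hx : x ∈ Ioo (0:ℝ) 1) : 0 ≤ G2 n x :=
  setIntegral_nonneg measurableSet_Ioo fun y hy => G1_nonneg n hx hy

theorem G2_le (n : ℕ) {x : ℝ} (hx : x ∈ Ioo (0:ℝ) 1) :
    G2 n x ≤ cconst ^ n * Kp * Kp * pfun x := by
  have h : G2 n x ≤ ∫ y in Ioo (0:ℝ) 1, cconst ^ n * pfun x * Kp * pfun y := by
    apply setIntegral_mono_on (Iy n hx) (pfun_integrable.const_mul _) measurableSet_Ioo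
    intro y hy
    calc G1 n x y ≤ cconst ^ n * (pfun x * pfun y) * Kp := G1_le n hx hy
      _ = cconst ^ n * pfun x * Kp * pfun y := by ring
  rw [integral_const_mul] at h
  calc G2 n x ≤ cconst ^ n * pfun x * Kp * Kp := h
    _ = cconst ^ n * Kp * Kp * pfun x := by ring

theorem Ix (n : ℕ) : IntegrableOn (G2 n) (Ioo (0:ℝ) 1) := by
  apply (pfun_integrable.const_mul (cconst ^ n * Kp * Kp)).mono'
  · exact (G2_sm n).aestronglyMeasurable
  · rw [ae_restrict_iff' measurableSet_Ioo]
    filter_upwards with x hx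
    rw [Real.norm_eq_abs, abs_of_nonneg (G2_nonneg n hx)]
    exact G2_le n hx

theorem beukersJ_eq (n : ℕ) : beukersJ n = ∫ x in Ioo (0:ℝ) 1, G2 n x := rfl

theorem J_le (n : ℕ) : beukersJ n ≤ cconst ^ n * (Kp * Kp * Kp) := by
  rw [beukersJ_eq]
  have h : (∫ x in Ioo (0:ℝ) 1, G2 n x) ≤ ∫ x in Ioo (0:ℝ) 1,
      cconst ^ n * Kp * Kp * pfun x := by
    apply setIntegral_mono_on (Ix n) (pfun_integrable.const_mul _) measurableSet_Ioo
    intro x hx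
    exact G2_le n hx
  rw [integral_const_mul] at h
  calc (∫ x in Ioo (0:ℝ) 1, G2 n x) ≤ cconst ^ n * Kp * Kp * Kp := h
    _ = cconst ^ n * (Kp * Kp * Kp) := by ring

theorem Ssub : Ioo (1/4:ℝ) (1/2) ⊆ Ioo (0:ℝ) 1 := Ioo_subset_Ioo (by norm_num) (by norm_num)

theorem vol_S : (volume (Ioo (1/4:ℝ) (1/2))).toReal = 4⁻¹ := by
  rw [Real.volume_Ioo, ENNReal.toReal_ofReal (by norm_num)]
  norm_num

theorem lower_step {f : ℝ → ℝ} (hf : IntegrableOn f (Ioo (0:ℝ) 1))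
    (h0 : ∀ t ∈ Ioo (0:ℝ) 1, 0 ≤ f t) (e : ℝ) (he : 0 ≤ e)
    (hlow : ∀ t ∈ Ioo (1/4:ℝ) (1/2), e ≤ f t) :
    e * 4⁻¹ ≤ ∫ t in Ioo (0:ℝ) 1, f t := by
  have h1 : (∫ _t in Ioo (1/4:ℝ) (1/2), e) ≤ ∫ t in Ioo (1/4:ℝ) (1/2), f t := by
    apply setIntegral_mono_on _ (hf.mono_set Ssub) measurableSet_Ioo hlow
    exact integrableOn_const measure_Ioo_lt_top.ne (by simp)
  have h2 : (∫ t in Ioo (1/4:ℝ) (1/2), f t) ≤ ∫ t in Ioo (0:ℝ) 1, f t := by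
    apply setIntegral_mono_set hf
    · exact (ae_restrict_iff' measurableSet_Ioo).2 (Filter.Eventually.of_forall h0)
    · exact (Ssub).eventuallyLE
  have h3 : (∫ _t in Ioo (1/4:ℝ) (1/2), e) = e * 4⁻¹ := by
    rw [setIntegral_const, measureReal_def, vol_S, smul_eq_mul, mul_comm]
  linarith

theorem J_low (n : ℕ) : ((512:ℝ)⁻¹) ^ n * 64⁻¹ ≤ beukersJ n := by
  rw [beukersJ_eq]
  have hG1 : ∀ x ∈ Ioo (1/4:ℝ) (1/2), ∀ y ∈ Ioo (1/4:ℝ) (1/2),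
      ((512:ℝ)⁻¹) ^ n * 4⁻¹ ≤ G1 n x y := by
    intro x hx y hy
    exact lower_step (Iz n (Ssub hx) (Ssub hy)) (fun z hz => gfun_nonneg n (Ssub hx) (Ssub hy) hz)
      _ (by positivity) (fun z hz => gfun_lower n hx hy hz)
  have hG2 : ∀ x ∈ Ioo (1/4:ℝ) (1/2), ((512:ℝ)⁻¹) ^ n * 4⁻¹ * 4⁻¹ ≤ G2 n x := by
    intro x hx
    exact lower_step (Iy n (Ssub hx)) (fun y hy => G1_nonneg n (Ssub hx) hy)
      _ (by positivity) (hG1 x hx)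
  have := lower_step (Ix n) (fun x hx => G2_nonneg n hx) _
    (by positivity : (0:ℝ) ≤ ((512:ℝ)⁻¹) ^ n * 4⁻¹ * 4⁻¹) hG2
  calc ((512:ℝ)⁻¹) ^ n * 64⁻¹ = ((512:ℝ)⁻¹) ^ n * 4⁻¹ * 4⁻¹ * 4⁻¹ := by ring
    _ ≤ _ := this

theorem J_pos (n : ℕ) : 0 < beukersJ n :=
  lt_of_lt_of_le (by positivity) (J_low n)

end BeukersAux

theorem beukersJ_pos_and_decay :
    (∀ n : ℕ, 0 < beukersJ n) ∧
    limsup (fun n : ℕ => Real.log (beukersJ n) / (n : ℝ)) atTop ≤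
      4 * Real.log (Real.sqrt 2 - 1) := by
  open BeukersAux in
  refine ⟨J_pos, ?_⟩
  have hc0 : 0 < cconst := cconst_pos
  have hK0 : 0 < Kp * Kp * Kp := by
    have := (J_pos 0).trans_le (J_le 0)
    simpa using this
  set u : ℕ → ℝ := fun n => Real.log (beukersJ n) / (n : ℝ) with hu
  set v : ℕ → ℝ := fun n => Real.log cconst + Real.log (Kp * Kp * Kp) / (n : ℝ) with hv
  have hub : ∀ᶠ n in atTop, u n ≤ v n := by
    filter_upwards [eventually_ge_atTop 1] with n hn
    have hn0 : (0:ℝ) < (n : ℝ) := by exact_mod_cast hn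
    have hlog : Real.log (beukersJ n) ≤ (n : ℝ) * Real.log cconst + Real.log (Kp * Kp * Kp) := by
      calc Real.log (beukersJ n) ≤ Real.log (cconst ^ n * (Kp * Kp * Kp)) :=
            Real.log_le_log (J_pos n) (J_le n)
        _ = Real.log (cconst ^ n) + Real.log (Kp * Kp * Kp) :=
            Real.log_mul (pow_ne_zero n hc0.ne') hK0.ne'
        _ = (n : ℝ) * Real.log cconst + Real.log (Kp * Kp * Kp) := by
            rw [Real.log_pow]
    have : u n ≤ ((n : ℝ) * Real.log cconst + Real.log (Kp * Kp * Kp)) / (n : ℝ) := by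
      exact div_le_div_of_nonneg_right hlog hn0.le |>.trans_eq rfl
    refine this.trans_eq ?_
    simp only [hv]; rw [add_div, mul_div_cancel_left₀ _ hn0.ne']
  have hv_tendsto : Filter.Tendsto v atTop (nhds (Real.log cconst)) := by
    have h0 : Filter.Tendsto (fun n : ℕ => Real.log (Kp * Kp * Kp) / (n : ℝ)) atTop (nhds 0) :=
      tendsto_const_div_atTop_nhds_zero_nat _
    simpa using tendsto_const_nhds.add h0
  have hlb : ∀ᶠ n in atTop, Real.log ((512:ℝ)⁻¹) - Real.log 64 ≤ u n := by
    filter_upwards [eventually_ge_atTop 1] with n hn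
    have hn0 : (0:ℝ) < (n : ℝ) := by exact_mod_cast hn
    have hn1 : (1:ℝ) ≤ (n : ℝ) := by exact_mod_cast hn
    have hlog : (n : ℝ) * Real.log ((512:ℝ)⁻¹) - Real.log 64 ≤ Real.log (beukersJ n) := by
      calc (n : ℝ) * Real.log ((512:ℝ)⁻¹) - Real.log 64
          = Real.log (((512:ℝ)⁻¹) ^ n * 64⁻¹) := by
            rw [Real.log_mul (by positivity) (by norm_num), Real.log_pow,
              Real.log_inv 64]
            ring
        _ ≤ Real.log (beukersJ n) := Real.log_le_log (by positivity) (J_low n)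
    have h1 : Real.log ((512:ℝ)⁻¹) - Real.log 64 / (n:ℝ) ≤ u n := by
      calc Real.log ((512:ℝ)⁻¹) - Real.log 64 / (n:ℝ)
          = ((n:ℝ) * Real.log ((512:ℝ)⁻¹) - Real.log 64) / (n:ℝ) := by
            field_simp
        _ ≤ Real.log (beukersJ n) / (n:ℝ) := div_le_div_of_nonneg_right hlog hn0.le
        _ = u n := rfl
    refine le_trans ?_ h1
    have h64 : (0:ℝ) ≤ Real.log 64 := Real.log_nonneg (by norm_num)
    have : Real.log 64 / (n:ℝ) ≤ Real.log 64 := by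
      rw [div_le_iff₀ hn0]
      nlinarith
    linarith
  have hcobdd : IsCoboundedUnder (· ≤ ·) atTop u := by
    apply Filter.IsBoundedUnder.isCoboundedUnder_le
    exact ⟨Real.log ((512:ℝ)⁻¹) - Real.log 64, by
      rw [Filter.eventually_map]
      exact hlb⟩
  have hbdd : IsBoundedUnder (· ≤ ·) atTop v := hv_tendsto.isBoundedUnder_le
  have := Filter.limsup_le_limsup hub hcobdd hbdd
  rw [hv_tendsto.limsup_eq] at this
  refine this.trans_eq ?_
  unfold cconst
  rw [Real.log_pow]
  norm_num
end

section
/- Let a ≥ 2 be an integer and define E(n) := ∫₀¹∫₀¹ ( x(1-x)y(1-y)/(1-xy/a) )ⁿ · dx dy/(1-xy/a) and L₂(a) := Σ_{k=1}^{∞} 1/(k²·aᵏ). Then there exist sequences of rational numbers A(n), B(n), C(n) such that E(n) = A(n) + B(n)·L₂(a) + C(n)·log((a-1)/a) for all n ≥ 0. -/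
open MeasureTheory Finset Nat Polynomial intervalIntegral
open scoped algebraMap

/-- The double integral `E(n) = ∫₀¹∫₀¹ (x(1-x)y(1-y)/(1-xy/a))ⁿ dx dy/(1-xy/a)`. -/
noncomputable def beukersE (a : ℕ) (n : ℕ) : ℝ :=
  ∫ x in (0:ℝ)..1, ∫ y in (0:ℝ)..1,
    (x * (1 - x) * y * (1 - y) / (1 - x * y / (a : ℝ))) ^ n / (1 - x * y / (a : ℝ))

/-- The dilogarithm value `L₂(a) = Σ_{k≥1} 1/(k² aᵏ)`. -/
noncomputable def L2 (a : ℕ) : ℝ :=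
  ∑' k : ℕ, 1 / (((k : ℝ) + 1) ^ 2 * (a : ℝ) ^ (k + 1))



/-- `J m p = ∫₀¹ x^m (1-x)^p dx`. -/
noncomputable def bJ (m p : ℕ) : ℝ := ∫ x in (0:ℝ)..1, x ^ m * (1 - x) ^ p

lemma bJ_eval (p m : ℕ) : bJ m p = (m ! : ℝ) * p ! / (m + p + 1)! := by
  induction p generalizing m with
  | zero =>
    simp only [bJ, pow_zero, mul_one, integral_pow, Nat.factorial_zero]
    rw [Nat.add_zero, Nat.factorial_succ]
    push_cast
    rw [one_pow, zero_pow (by omega)]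
    have : ((m:ℝ)+1) ≠ 0 := by positivity
    field_simp
    norm_num
  | succ p ih =>
    have h1 : bJ m (p+1) = bJ m p - bJ (m+1) p := by
      have hsub : bJ m (p+1) = ∫ x in (0:ℝ)..1, (x ^ m * (1-x)^p - x^(m+1) * (1-x)^p) := by
        unfold bJ
        apply intervalIntegral.integral_congr
        intro x _
        ring
      rw [hsub, intervalIntegral.integral_sub] <;>
        first
        | rfl
        | exact (Continuous.intervalIntegrable (by continuity) _ _)
    rw [h1, ih m, ih (m+1)]
    have e1 : m + 1 + p + 1 = m + (p + 1) + 1 := by ring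
    rw [e1]
    have e2 : (m + (p+1) + 1)! = (m + (p+1) + 1) * (m + p + 1)! := by
      have : m + (p+1) + 1 = (m + p + 1) + 1 := by ring
      rw [this, Nat.factorial_succ]
    rw [e2, Nat.factorial_succ m, Nat.factorial_succ p]
    have h2 : ((m+p+1)! : ℝ) ≠ 0 := by positivity
    push_cast
    field_simp
    ring

lemma fact_add_prod (m c : ℕ) : (m + c)! = m ! * ∏ i ∈ range c, (m + i + 1) := by
  induction c with
  | zero => simp
  | succ c ih =>
    rw [prod_range_succ, show m + (c+1) = (m+c)+1 by ring, Nat.factorial_succ, ih]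
    ring



section
variable {a : ℕ}

lemma haR (ha : 2 ≤ a) : (2:ℝ) ≤ (a:ℝ) := by exact_mod_cast ha
lemma ha0 (ha : 2 ≤ a) : (a:ℝ) ≠ 0 := by have := haR ha; linarith
lemma hq_lt (ha : 2 ≤ a) : (a:ℝ)⁻¹ < 1 := by
  rw [inv_lt_one_iff₀]; right; linarith [haR ha]

lemma summable_aux (ha : 2 ≤ a) (s : ℕ) (c : ℕ) (hc : 1 ≤ c) :
    Summable (fun k : ℕ => ((a:ℝ)⁻¹) ^ k / ((k:ℝ) + c) ^ s) := by
  apply Summable.of_nonneg_of_le (fun k => by positivity) (fun k => ?_)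
    (summable_geometric_of_lt_one (by positivity) (hq_lt ha))
  have h1 : (1:ℝ) ≤ ((k:ℝ) + c) ^ s := by
    apply one_le_pow₀
    have : (1:ℝ) ≤ (c:ℝ) := by exact_mod_cast hc
    linarith [Nat.cast_nonneg (α := ℝ) k]
  calc ((a:ℝ)⁻¹) ^ k / ((k:ℝ) + c) ^ s ≤ ((a:ℝ)⁻¹) ^ k / 1 := by
        apply div_le_div_of_nonneg_left ?_ one_pos h1
        · positivity
    _ = ((a:ℝ)⁻¹) ^ k := by ring

lemma L2_eq : L2 a = ∑' k : ℕ, ((a:ℝ)⁻¹) ^ (k+1) / ((k:ℝ) + 1) ^ 2 := by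
  unfold L2
  congr 1; funext k
  rw [inv_pow, one_div, mul_inv, div_eq_mul_inv, mul_comm]

lemma summable_L2 (ha : 2 ≤ a) :
    Summable (fun k : ℕ => ((a:ℝ)⁻¹) ^ (k+1) / ((k:ℝ) + 1) ^ 2) := by
  have := (summable_aux ha 2 1 le_rfl).mul_left ((a:ℝ)⁻¹)
  apply this.congr
  intro k
  push_cast
  ring

lemma sigma2 (ha : 2 ≤ a) (c : ℕ) (hc : 1 ≤ c) :
    ∃ u v : ℚ, (∑' k : ℕ, ((a:ℝ)⁻¹) ^ k / ((k:ℝ) + c) ^ 2) = (u:ℝ) + (v:ℝ) * L2 a := by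
  obtain ⟨m, rfl⟩ : ∃ m, c = m + 1 := ⟨c - 1, by omega⟩
  have hsum := summable_L2 ha
  have hkey := (Summable.sum_add_tsum_nat_add (f := fun k : ℕ => ((a:ℝ)⁻¹) ^ (k+1) / ((k:ℝ) + 1) ^ 2) m hsum)
  have htail : (∑' k : ℕ, ((a:ℝ)⁻¹) ^ (k + m + 1) / ((k:ℝ) + m + 1) ^ 2)
      = L2 a - ∑ i ∈ range m, ((a:ℝ)⁻¹) ^ (i+1) / ((i:ℝ) + 1) ^ 2 := by
    rw [L2_eq, ← hkey]
    have : (∑' k : ℕ, ((a:ℝ)⁻¹) ^ (k + m + 1) / ((k:ℝ) + m + 1) ^ 2)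
        = ∑' k : ℕ, ((a:ℝ)⁻¹) ^ ((k + m) + 1) / (((k + m : ℕ):ℝ) + 1) ^ 2 := by
      congr 1; funext k; push_cast; ring_nf
    rw [this]
    ring
  have hshift : (∑' k : ℕ, ((a:ℝ)⁻¹) ^ k / ((k:ℝ) + (m+1)) ^ 2)
      = (a:ℝ) ^ (m+1) * ∑' k : ℕ, ((a:ℝ)⁻¹) ^ (k + m + 1) / ((k:ℝ) + m + 1) ^ 2 := by
    rw [← tsum_mul_left]
    congr 1; funext k
    have h0 := ha0 ha
    rw [pow_add, pow_add]
    field_simp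
    have e : (a:ℝ)^m * (a:ℝ)⁻¹^m = 1 := by rw [← mul_pow, mul_inv_cancel₀ h0, one_pow]
    linear_combination (-(((a:ℝ)⁻¹)^k * ((k:ℝ)+m+1)^2)) * e
  refine ⟨- (a:ℚ)^(m+1) * ∑ i ∈ range m, ((a:ℚ)⁻¹) ^ (i+1) / ((i:ℚ) + 1) ^ 2, (a:ℚ)^(m+1), ?_⟩
  have hcast : ∀ k : ℕ, ((k:ℝ) + ((m+1 : ℕ):ℝ)) = (k:ℝ) + (m+1:ℝ) := by intro k; push_cast; ring
  simp only [hcast]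
  rw [hshift, htail]
  push_cast
  ring

lemma sigma1 (ha : 2 ≤ a) (c : ℕ) (hc : 1 ≤ c) :
    ∃ u v : ℚ, (∑' k : ℕ, ((a:ℝ)⁻¹) ^ k / ((k:ℝ) + c))
      = (u:ℝ) + (v:ℝ) * Real.log (((a:ℝ) - 1) / (a:ℝ)) := by
  obtain ⟨m, rfl⟩ : ∃ m, c = m + 1 := ⟨c - 1, by omega⟩
  have hlog : HasSum (fun k : ℕ => ((a:ℝ)⁻¹) ^ (k+1) / ((k:ℝ)+1))
      (- Real.log (((a:ℝ) - 1) / (a:ℝ))) := by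
    have h := Real.hasSum_pow_div_log_of_abs_lt_one
      (x := (a:ℝ)⁻¹) (by rw [abs_of_nonneg (by positivity)]; exact hq_lt ha)
    have : 1 - (a:ℝ)⁻¹ = ((a:ℝ) - 1) / (a:ℝ) := by
      field_simp [ha0 ha]
    rw [this] at h
    exact h
  have hsum := hlog.summable
  have hkey := (Summable.sum_add_tsum_nat_add (f := fun k : ℕ => ((a:ℝ)⁻¹) ^ (k+1) / ((k:ℝ) + 1)) m hsum)
  rw [hlog.tsum_eq] at hkey
  have htail : (∑' k : ℕ, ((a:ℝ)⁻¹) ^ (k + m + 1) / ((k:ℝ) + m + 1))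
      = - Real.log (((a:ℝ) - 1) / (a:ℝ)) - ∑ i ∈ range m, ((a:ℝ)⁻¹) ^ (i+1) / ((i:ℝ) + 1) := by
    rw [← hkey]
    have : (∑' k : ℕ, ((a:ℝ)⁻¹) ^ (k + m + 1) / ((k:ℝ) + m + 1))
        = ∑' k : ℕ, ((a:ℝ)⁻¹) ^ ((k + m) + 1) / (((k + m : ℕ):ℝ) + 1) := by
      congr 1; funext k; push_cast; ring_nf
    rw [this]
    ring
  have hshift : (∑' k : ℕ, ((a:ℝ)⁻¹) ^ k / ((k:ℝ) + m + 1))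
      = (a:ℝ) ^ (m+1) * ∑' k : ℕ, ((a:ℝ)⁻¹) ^ (k + m + 1) / ((k:ℝ) + m + 1) := by
    rw [← tsum_mul_left]
    congr 1; funext k
    have h0 := ha0 ha
    rw [pow_add, pow_add]
    field_simp
    have e : (a:ℝ)^m * (a:ℝ)⁻¹^m = 1 := by rw [← mul_pow, mul_inv_cancel₀ h0, one_pow]
    linear_combination (-(((a:ℝ)⁻¹)^k)) * e
  refine ⟨- (a:ℚ)^(m+1) * ∑ i ∈ range m, ((a:ℚ)⁻¹) ^ (i+1) / ((i:ℚ) + 1), -(a:ℚ)^(m+1), ?_⟩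
  have hcast : ∀ k : ℕ, ((k:ℝ) + ((m+1 : ℕ):ℝ)) = (k:ℝ) + (m:ℝ) + 1 := by intro k; push_cast; ring
  simp only [hcast]
  rw [hshift, htail]
  push_cast
  ring

end


lemma partial_frac (n : ℕ) : ∃ α β : ℕ → ℚ, ∀ k : ℕ,
    ((n ! : ℚ) * ∏ i ∈ range n, ((k:ℚ) + i + 1)) / (∏ i ∈ range (n+1), ((k:ℚ) + n + i + 1)) ^ 2
    = ∑ i ∈ range (n+1), (α i / ((k:ℚ) + n + i + 1) + β i / ((k:ℚ) + n + i + 1) ^ 2) := by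
  classical
  set K := RatFunc ℚ
  set g : ℕ → ℚ[X] := fun i => (X + C ((n:ℚ) + i + 1)) ^ 2 with hg_def
  set f : ℚ[X] := C (n ! : ℚ) * ∏ i ∈ range n, (X + C ((i:ℚ) + 1)) with hf_def
  have hmonic : ∀ i ∈ range (n+1), (g i).Monic := fun i _ => (monic_X_add_C _).pow _
  have hcop : (↑(range (n+1)) : Set ℕ).Pairwise fun i j => IsCoprime (g i) (g j) := by
    intro i _ j _ hij
    apply IsCoprime.pow
    have h1 : IsCoprime (X - C (-((n:ℚ) + i + 1))) (X - C (-((n:ℚ) + j + 1))) := by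
      apply isCoprime_X_sub_C_of_isUnit_sub
      apply isUnit_iff_ne_zero.2
      intro h
      apply hij
      have : (i:ℚ) = (j:ℚ) := by
        have h2 : -((n:ℚ) + i + 1) - -((n:ℚ) + j + 1) = 0 := h
        linarith
      exact_mod_cast this
    rw [map_neg, map_neg, sub_neg_eq_add, sub_neg_eq_add] at h1
    exact h1
  obtain ⟨q, r, hdeg, heq⟩ := div_eq_quo_add_sum_rem_div (K := K) f hmonic hcop
  set s : Finset ℕ := range (n+1) with hs_def
  set D : ℚ[X] := ∏ i ∈ s, g i with hD_def
  -- polynomial identity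
  have hginj : Function.Injective (algebraMap ℚ[X] K) := IsFractionRing.injective _ _
  have hDne : (algebraMap ℚ[X] K) D ≠ 0 := by
    rw [map_ne_zero_iff _ hginj]
    exact (monic_prod_of_monic _ _ hmonic).ne_zero
  have hgne : ∀ i ∈ s, (algebraMap ℚ[X] K) (g i) ≠ 0 := by
    intro i hi
    rw [map_ne_zero_iff _ hginj]
    exact (hmonic i hi).ne_zero
  have hDK : (algebraMap ℚ[X] K) D = ∏ i ∈ s, (algebraMap ℚ[X] K) (g i) := by
    rw [hD_def, map_prod]
  have heq2 : (algebraMap ℚ[X] K) f / (algebraMap ℚ[X] K) D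
      = (algebraMap ℚ[X] K) q + ∑ i ∈ s, (algebraMap ℚ[X] K) (r i) / (algebraMap ℚ[X] K) (g i) := by
    rw [hDK]; exact heq
  have hterm : ∀ i ∈ s, (algebraMap ℚ[X] K) (r i) / (algebraMap ℚ[X] K) (g i) * (algebraMap ℚ[X] K) D
      = (algebraMap ℚ[X] K) (r i * ∏ j ∈ s.erase i, g j) := by
    intro i hi
    rw [map_mul, map_prod, ← Finset.mul_prod_erase _ _ hi]
    rw [mul_comm ((algebraMap ℚ[X] K) (g i)), ← mul_assoc, div_mul_eq_mul_div, mul_div_assoc,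
      mul_assoc, div_mul_cancel₀ _ (hgne i hi), map_prod]
  have hpoly : f = q * D + ∑ i ∈ s, r i * ∏ j ∈ s.erase i, g j := by
    apply hginj
    rw [div_eq_iff hDne] at heq2
    rw [heq2, add_mul, Finset.sum_mul, Finset.sum_congr rfl hterm, ← map_mul, ← map_sum, ← map_add]
  -- q = 0 by degree considerations
  have hDne0 : D ≠ 0 := (monic_prod_of_monic _ _ hmonic).ne_zero
  have hgnd : ∀ i ∈ s, (g i).natDegree = 2 := by
    intro i _
    show ((X + C ((n:ℚ) + i + 1)) ^ 2).natDegree = 2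
    rw [natDegree_pow, natDegree_X_add_C]
  have hDnd : D.natDegree = 2 * (n+1) := by
    rw [hD_def, natDegree_prod _ _ (fun i hi => (hmonic i hi).ne_zero),
      Finset.sum_congr rfl hgnd, Finset.sum_const, smul_eq_mul, hs_def, card_range]
    omega
  have hrnd : ∀ i ∈ s, (r i).natDegree ≤ 1 := by
    intro i hi
    by_cases h0 : r i = 0
    · simp [h0]
    · have hlt := hdeg i hi
      have hg2 : (g i).degree = (2:ℕ) := by
        rw [degree_eq_natDegree (hmonic i hi).ne_zero, hgnd i hi]
      rw [hg2] at hlt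
      have : (r i).natDegree < 2 := (natDegree_lt_iff_degree_lt h0).2 hlt
      omega
  have hend : ∀ i ∈ s, (r i * ∏ j ∈ s.erase i, g j).natDegree ≤ 2*n+1 := by
    intro i hi
    apply le_trans natDegree_mul_le
    have h2 : (∏ j ∈ s.erase i, g j).natDegree ≤ 2*n := by
      apply le_trans (natDegree_prod_le _ _)
      rw [Finset.sum_congr rfl (fun j hj => hgnd j (Finset.mem_of_mem_erase hj)),
        Finset.sum_const, smul_eq_mul, Finset.card_erase_of_mem hi, hs_def, card_range]
      omega
    have := hrnd i hi
    omega
  have hfnd : f.natDegree ≤ n := by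
    apply le_trans natDegree_mul_le
    have hpr : (∏ i ∈ range n, (X + C ((i:ℚ) + 1))).natDegree ≤ n := by
      apply le_trans (natDegree_prod_le _ _)
      apply le_trans (Finset.sum_le_card_nsmul _ _ 1 (fun i _ => le_of_eq (natDegree_X_add_C _)))
      rw [card_range, smul_eq_mul]
      omega
    rw [natDegree_C]
    omega
  have hq0 : q = 0 := by
    by_contra hq
    have h1 : (q * D).natDegree = q.natDegree + D.natDegree := natDegree_mul hq hDne0
    have h2 : q * D = f - ∑ i ∈ s, r i * ∏ j ∈ s.erase i, g j := by
      rw [hpoly]; ring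
    have h3 : (f - ∑ i ∈ s, r i * ∏ j ∈ s.erase i, g j).natDegree ≤ 2*n+1 := by
      apply le_trans (natDegree_sub_le _ _)
      apply max_le (by omega)
      exact natDegree_sum_le_of_forall_le _ _ hend
    rw [← h2, h1, hDnd] at h3
    omega
  rw [hq0, zero_mul, zero_add] at hpoly
  -- now evaluate
  refine ⟨fun i => (r i).coeff 1, fun i => (r i).coeff 0 - (r i).coeff 1 * ((n:ℚ) + i + 1), ?_⟩
  intro k
  set t : ℚ := (k:ℚ) with ht_def
  have hgeval : ∀ i, (g i).eval t = (t + n + i + 1)^2 := by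
    intro i
    simp [hg_def]
    ring
  have hgne' : ∀ i : ℕ, (t + (n:ℚ) + i + 1) ≠ 0 := by
    intro i
    have : (0:ℚ) ≤ t := by rw [ht_def]; positivity
    positivity
  have hDeval : D.eval t = ∏ i ∈ s, (t + n + i + 1)^2 := by
    rw [hD_def, eval_prod]
    exact Finset.prod_congr rfl (fun i _ => hgeval i)
  have hDevalne : D.eval t ≠ 0 := by
    rw [hDeval]
    exact Finset.prod_ne_zero_iff.2 (fun i _ => pow_ne_zero _ (hgne' i))
  have hfeval : f.eval t = (n ! : ℚ) * ∏ i ∈ range n, (t + i + 1) := by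
    rw [hf_def, eval_mul, eval_C, eval_prod]
    congr 1
    exact Finset.prod_congr rfl (fun i _ => by simp; ring)
  have hreval : ∀ i ∈ s, (r i).eval t = (r i).coeff 0 + (r i).coeff 1 * t := by
    intro i hi
    rw [eval_eq_sum_range' (n := 2) (lt_of_le_of_lt (hrnd i hi) one_lt_two)]
    simp [Finset.sum_range_succ]
  have hLHS : ((n ! : ℚ) * ∏ i ∈ range n, ((k:ℚ) + i + 1))
      / (∏ i ∈ range (n+1), ((k:ℚ) + n + i + 1)) ^ 2 = f.eval t / D.eval t := by
    rw [hfeval, hDeval, ← Finset.prod_pow]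
  rw [hLHS, hpoly]
  rw [eval_finset_sum]
  rw [Finset.sum_div]
  apply Finset.sum_congr rfl
  intro i hi
  have hsplit : D.eval t = (g i).eval t * ∏ j ∈ s.erase i, (g j).eval t := by
    rw [hD_def, eval_prod, ← Finset.mul_prod_erase _ _ hi]
  have hprodne : (∏ j ∈ s.erase i, (g j).eval t) ≠ 0 := by
    apply Finset.prod_ne_zero_iff.2
    intro j _
    rw [hgeval j]
    exact pow_ne_zero _ (hgne' j)
  have hgine : (g i).eval t ≠ 0 := by rw [hgeval i]; exact pow_ne_zero _ (hgne' i)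
  have hterm2 : (r i * ∏ j ∈ s.erase i, g j).eval t / D.eval t
      = (r i).eval t / (g i).eval t := by
    rw [eval_mul, eval_prod, hsplit]
    field_simp
  rw [hterm2, hreval i hi, hgeval i]
  have hc := hgne' i
  field_simp
  ring



lemma bJ_nonneg (m p : ℕ) : 0 ≤ bJ m p := by
  rw [bJ_eval]
  positivity

lemma bJ_le_one (m p : ℕ) : bJ m p ≤ 1 := by
  rw [bJ_eval]
  rw [div_le_one (by positivity)]
  have h1 : m ! * p ! ∣ (m + p)! := Nat.factorial_mul_factorial_dvd_factorial_add m p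
  have h2 : m ! * p ! ≤ (m + p + 1)! :=
    le_trans (Nat.le_of_dvd (Nat.factorial_pos _) h1)
      (Nat.factorial_le (by omega))
  exact_mod_cast h2

section Analytic

variable {a n : ℕ}

lemma half_lt_one : ‖(2:ℝ)⁻¹‖ < 1 := by
  rw [Real.norm_eq_abs, abs_of_nonneg (by norm_num)]
  norm_num

/-- the majorant is summable -/
lemma maj_summable (n : ℕ) : Summable (fun j : ℕ => ((j + n).choose n : ℝ) * (2:ℝ)⁻¹ ^ j) := by
  have := summable_choose_mul_geometric_of_norm_lt_one (k := n) (r := (2:ℝ)⁻¹) half_lt_one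
  exact this

lemma choose_nonneg (j : ℕ) : (0:ℝ) ≤ ((j + n).choose n : ℝ) := by positivity

/-- pointwise series expansion of the integrand -/
lemma integrand_hasSum (ha : 2 ≤ a) {x y : ℝ} (hx0 : 0 ≤ x) (hx1 : x ≤ 1)
    (hy0 : 0 ≤ y) (hy1 : y ≤ 1) :
    HasSum (fun j : ℕ => ((j + n).choose n : ℝ) * (x*y/(a:ℝ))^j * (x*(1-x)*y*(1-y))^n)
      ((x * (1 - x) * y * (1 - y) / (1 - x * y / (a : ℝ))) ^ n / (1 - x * y / (a : ℝ))) := by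
  have haR : (2:ℝ) ≤ (a:ℝ) := by exact_mod_cast ha
  have hr2 : x * y / (a:ℝ) ≤ 2⁻¹ := by
    have hxy : x * y ≤ 1 := mul_le_one₀ hx1 hy0 hy1
    rw [div_le_iff₀ (by linarith)]
    nlinarith
  have hr0 : 0 ≤ x * y / (a:ℝ) := by positivity
  have hrn : ‖x * y / (a:ℝ)‖ < 1 := by
    rw [Real.norm_eq_abs, abs_of_nonneg hr0]
    linarith
  have hd0 : (1:ℝ) - x * y / (a:ℝ) ≠ 0 := by
    have : x * y / (a:ℝ) < 1 := lt_of_le_of_lt hr2 (by norm_num)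
    intro h
    linarith [this]
  have h := (hasSum_choose_mul_geometric_of_norm_lt_one n hrn).mul_right
    ((x*(1-x)*y*(1-y))^n)
  have e : (x * (1 - x) * y * (1 - y) / (1 - x * y / (a : ℝ))) ^ n / (1 - x * y / (a : ℝ))
      = 1 / (1 - x * y / (a:ℝ)) ^ (n + 1) * (x * (1 - x) * y * (1 - y)) ^ n := by
    rw [div_pow, div_div, ← pow_succ, div_eq_mul_inv, one_div, mul_comm]
  rw [e]; exact h

end Analytic

section Swap

variable {a n : ℕ}

lemma quad_nonneg {x y : ℝ} (hx0 : 0 ≤ x) (hx1 : x ≤ 1) (hy0 : 0 ≤ y) (hy1 : y ≤ 1) :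
    0 ≤ x*(1-x)*y*(1-y) :=
  mul_nonneg (mul_nonneg (mul_nonneg hx0 (by linarith)) hy0) (by linarith)

lemma quad_le_one {x y : ℝ} (hx0 : 0 ≤ x) (hx1 : x ≤ 1) (hy0 : 0 ≤ y) (hy1 : y ≤ 1) :
    x*(1-x)*y*(1-y) ≤ 1 := by
  have h1 : x*(1-x) ≤ 1 := by nlinarith
  have h2 : y*(1-y) ≤ 1 := by nlinarith
  have h3 : 0 ≤ y*(1-y) := mul_nonneg hy0 (by linarith)
  have e : x*(1-x)*y*(1-y) = (x*(1-x))*(y*(1-y)) := by ring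
  rw [e]
  exact mul_le_one₀ h1 h3 h2

lemma pow_prod_le_one {x y : ℝ} (hx0 : 0 ≤ x) (hx1 : x ≤ 1) (hy0 : 0 ≤ y) (hy1 : y ≤ 1) :
    (x*(1-x)*y*(1-y))^n ≤ 1 :=
  pow_le_one₀ (quad_nonneg hx0 hx1 hy0 hy1) (quad_le_one hx0 hx1 hy0 hy1)

lemma inner_hasSum (ha : 2 ≤ a) {x : ℝ} (hx0 : 0 ≤ x) (hx1 : x ≤ 1) :
    HasSum (fun j : ℕ =>
        ((j + n).choose n : ℝ) * ((a:ℝ)⁻¹)^j * (x^(n+j) * (1-x)^n) * bJ (n+j) n)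
      (∫ y in Set.Ioc (0:ℝ) 1,
        (x * (1 - x) * y * (1 - y) / (1 - x * y / (a : ℝ))) ^ n / (1 - x * y / (a : ℝ))) := by
  have haR : (2:ℝ) ≤ (a:ℝ) := by exact_mod_cast ha
  set F : ℕ → ℝ → ℝ :=
    fun j y => ((j + n).choose n : ℝ) * (x*y/(a:ℝ))^j * (x*(1-x)*y*(1-y))^n with hF
  have hFc : ∀ j, Continuous (F j) := by
    intro j
    fun_prop
  have hFi : ∀ j, IntegrableOn (F j) (Set.Ioc (0:ℝ) 1) := fun j => (hFc j).integrableOn_Ioc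
  have hbound : ∀ j, ∀ y ∈ Set.Ioc (0:ℝ) 1, ‖F j y‖ ≤ ((j + n).choose n : ℝ) * (2:ℝ)⁻¹ ^ j := by
    intro j y hy
    obtain ⟨hy0, hy1⟩ := hy
    have hy0' : (0:ℝ) ≤ y := le_of_lt hy0
    have hF0 : 0 ≤ F j y := by
      apply mul_nonneg (mul_nonneg (by positivity) (by positivity))
      exact pow_nonneg (quad_nonneg hx0 hx1 hy0' hy1) n
    rw [Real.norm_eq_abs, abs_of_nonneg hF0]
    have h1 : (x*y/(a:ℝ))^j ≤ (2:ℝ)⁻¹^j := by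
      apply pow_le_pow_left₀ (by positivity)
      rw [div_le_iff₀ (by linarith)]
      nlinarith
    calc F j y ≤ ((j + n).choose n : ℝ) * (x*y/(a:ℝ))^j * 1 := by
          apply mul_le_mul_of_nonneg_left (pow_prod_le_one hx0 hx1 hy0' hy1) (by positivity)
      _ = ((j + n).choose n : ℝ) * (x*y/(a:ℝ))^j := mul_one _
      _ ≤ ((j + n).choose n : ℝ) * (2:ℝ)⁻¹^j := by
          apply mul_le_mul_of_nonneg_left h1 (by positivity)
  have hIoc_lt : volume (Set.Ioc (0:ℝ) 1) < ⊤ := measure_Ioc_lt_top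
  have hsum_int : Summable (fun j => ∫ y in Set.Ioc (0:ℝ) 1, ‖F j y‖) := by
    apply Summable.of_nonneg_of_le
      (fun j => integral_nonneg (fun y => norm_nonneg _)) (fun j => ?_) (maj_summable n)
    calc (∫ y in Set.Ioc (0:ℝ) 1, ‖F j y‖)
        ≤ ∫ _ in Set.Ioc (0:ℝ) 1, ((j + n).choose n : ℝ) * (2:ℝ)⁻¹ ^ j :=
          setIntegral_mono_on ((hFi j).norm)
            (integrableOn_const hIoc_lt.ne) measurableSet_Ioc (hbound j)
      _ = ((j + n).choose n : ℝ) * (2:ℝ)⁻¹ ^ j := by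
          rw [setIntegral_const]
          simp [Real.volume_Ioc]
  have hmain := hasSum_integral_of_summable_integral_norm hFi hsum_int
  have heval : ∀ j, (∫ y in Set.Ioc (0:ℝ) 1, F j y)
      = ((j + n).choose n : ℝ) * ((a:ℝ)⁻¹)^j * (x^(n+j) * (1-x)^n) * bJ (n+j) n := by
    intro j
    have hrepr : F j = fun y =>
        (((j + n).choose n : ℝ) * ((a:ℝ)⁻¹)^j * (x^(n+j) * (1-x)^n)) * (y^(n+j) * (1-y)^n) := by
      funext y
      show ((j + n).choose n : ℝ) * (x*y/(a:ℝ))^j * (x*(1-x)*y*(1-y))^n = _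
      simp only [div_eq_mul_inv, mul_pow]
      ring
    rw [hrepr, MeasureTheory.integral_const_mul]
    congr 1
    rw [bJ, intervalIntegral.integral_of_le zero_le_one]
  have hcongr : (∫ y in Set.Ioc (0:ℝ) 1, ∑' j, F j y)
      = ∫ y in Set.Ioc (0:ℝ) 1,
          (x * (1 - x) * y * (1 - y) / (1 - x * y / (a : ℝ))) ^ n / (1 - x * y / (a : ℝ)) := by
    apply setIntegral_congr_fun measurableSet_Ioc
    intro y hy
    exact (integrand_hasSum ha hx0 hx1 (le_of_lt hy.1) hy.2).tsum_eq
  rw [hcongr] at hmain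
  have hfun : (fun j => ∫ y in Set.Ioc (0:ℝ) 1, F j y)
      = fun j => ((j + n).choose n : ℝ) * ((a:ℝ)⁻¹)^j * (x^(n+j) * (1-x)^n) * bJ (n+j) n :=
    funext heval
  rw [hfun] at hmain
  exact hmain

lemma beukersE_hasSum (ha : 2 ≤ a) :
    HasSum (fun j : ℕ => ((j + n).choose n : ℝ) * ((a:ℝ)⁻¹)^j * (bJ (n+j) n)^2)
      (beukersE a n) := by
  have haR : (2:ℝ) ≤ (a:ℝ) := by exact_mod_cast ha
  set G : ℕ → ℝ → ℝ :=
    fun j x => ((j + n).choose n : ℝ) * ((a:ℝ)⁻¹)^j * (x^(n+j) * (1-x)^n) * bJ (n+j) n with hG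
  have hGc : ∀ j, Continuous (G j) := by
    intro j
    fun_prop
  have hGi : ∀ j, IntegrableOn (G j) (Set.Ioc (0:ℝ) 1) := fun j => (hGc j).integrableOn_Ioc
  have hbound : ∀ j, ∀ x ∈ Set.Ioc (0:ℝ) 1, ‖G j x‖ ≤ ((j + n).choose n : ℝ) * (2:ℝ)⁻¹ ^ j := by
    intro j x hx
    obtain ⟨hx0, hx1⟩ := hx
    have hx0' : (0:ℝ) ≤ x := le_of_lt hx0
    have hxp : (0:ℝ) ≤ x^(n+j) * (1-x)^n := by
      apply mul_nonneg (by positivity) (pow_nonneg (by linarith) n)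
    have hG0 : 0 ≤ G j x := by
      apply mul_nonneg (mul_nonneg (mul_nonneg (by positivity) (by positivity)) hxp) (bJ_nonneg _ _)
    rw [Real.norm_eq_abs, abs_of_nonneg hG0]
    have hxp1 : x^(n+j) * (1-x)^n ≤ 1 := by
      apply mul_le_one₀ (pow_le_one₀ hx0' hx1) (pow_nonneg (by linarith) n)
      exact pow_le_one₀ (by linarith) (by linarith)
    have hainv : ((a:ℝ)⁻¹)^j ≤ (2:ℝ)⁻¹^j := by
      apply pow_le_pow_left₀ (by positivity)
      rw [inv_le_inv₀ (by linarith) (by norm_num)]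
      exact haR
    calc G j x ≤ ((j + n).choose n : ℝ) * ((a:ℝ)⁻¹)^j * 1 * 1 := by
          apply mul_le_mul (mul_le_mul_of_nonneg_left hxp1 (by positivity)) (bJ_le_one _ _)
            (bJ_nonneg _ _) (by positivity)
      _ = ((j + n).choose n : ℝ) * ((a:ℝ)⁻¹)^j := by ring
      _ ≤ ((j + n).choose n : ℝ) * (2:ℝ)⁻¹^j := mul_le_mul_of_nonneg_left hainv (by positivity)
  have hIoc_lt : volume (Set.Ioc (0:ℝ) 1) < ⊤ := measure_Ioc_lt_top
  have hsum_int : Summable (fun j => ∫ x in Set.Ioc (0:ℝ) 1, ‖G j x‖) := by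
    apply Summable.of_nonneg_of_le
      (fun j => integral_nonneg (fun x => norm_nonneg _)) (fun j => ?_) (maj_summable n)
    calc (∫ x in Set.Ioc (0:ℝ) 1, ‖G j x‖)
        ≤ ∫ _ in Set.Ioc (0:ℝ) 1, ((j + n).choose n : ℝ) * (2:ℝ)⁻¹ ^ j :=
          setIntegral_mono_on ((hGi j).norm)
            (integrableOn_const hIoc_lt.ne) measurableSet_Ioc (hbound j)
      _ = ((j + n).choose n : ℝ) * (2:ℝ)⁻¹ ^ j := by
          rw [setIntegral_const]
          simp [Real.volume_Ioc]
  have hmain := hasSum_integral_of_summable_integral_norm hGi hsum_int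
  have heval : ∀ j, (∫ x in Set.Ioc (0:ℝ) 1, G j x)
      = ((j + n).choose n : ℝ) * ((a:ℝ)⁻¹)^j * (bJ (n+j) n)^2 := by
    intro j
    have hrepr : G j = fun x =>
        (((j + n).choose n : ℝ) * ((a:ℝ)⁻¹)^j * bJ (n+j) n) * (x^(n+j) * (1-x)^n) := by
      funext x
      show ((j + n).choose n : ℝ) * ((a:ℝ)⁻¹)^j * (x^(n+j) * (1-x)^n) * bJ (n+j) n = _
      ring
    rw [hrepr, MeasureTheory.integral_const_mul]
    have : (∫ x in Set.Ioc (0:ℝ) 1, x^(n+j) * (1-x)^n) = bJ (n+j) n := by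
      rw [bJ, intervalIntegral.integral_of_le zero_le_one]
    rw [this]
    ring
  have hcongr : (∫ x in Set.Ioc (0:ℝ) 1, ∑' j, G j x) = beukersE a n := by
    have hE : beukersE a n = ∫ x in Set.Ioc (0:ℝ) 1, ∫ y in Set.Ioc (0:ℝ) 1,
        (x * (1 - x) * y * (1 - y) / (1 - x * y / (a : ℝ))) ^ n / (1 - x * y / (a : ℝ)) := by
      rw [beukersE, intervalIntegral.integral_of_le zero_le_one]
      apply setIntegral_congr_fun measurableSet_Ioc
      intro x _
      show (∫ y in (0:ℝ)..1, (x * (1 - x) * y * (1 - y) / (1 - x * y / (a : ℝ))) ^ n / (1 - x * y / (a : ℝ))) = _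
      rw [intervalIntegral.integral_of_le zero_le_one]
    rw [hE]
    apply setIntegral_congr_fun measurableSet_Ioc
    intro x hx
    exact (inner_hasSum ha (le_of_lt hx.1) hx.2).tsum_eq
  rw [hcongr] at hmain
  have hfun : (fun j => ∫ x in Set.Ioc (0:ℝ) 1, G j x)
      = fun j => ((j + n).choose n : ℝ) * ((a:ℝ)⁻¹)^j * (bJ (n+j) n)^2 := funext heval
  rw [hfun] at hmain
  exact hmain

end Swap



lemma fact_add_prod' (m c : ℕ) : (m + c)! = m ! * ∏ i ∈ range c, (m + i + 1) := by
  induction c with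
  | zero => simp
  | succ c ih =>
    rw [prod_range_succ, show m + (c+1) = (m+c)+1 by ring, Nat.factorial_succ, ih]
    ring

lemma term_rat (n j : ℕ) :
    ((j + n).choose n : ℚ) * ((((n+j)! : ℚ) * (n ! : ℚ)) / (((n+j)+n+1)! : ℚ))^2
    = ((n ! : ℚ) * ∏ i ∈ range n, ((j:ℚ) + i + 1)) / (∏ i ∈ range (n+1), ((j:ℚ) + n + i + 1))^2 := by
  have hF3 : ((j ! : ℚ)) ≠ 0 := by exact_mod_cast (Nat.factorial_ne_zero j)
  have hF1 : (((n+j)! : ℚ)) ≠ 0 := by exact_mod_cast (Nat.factorial_ne_zero (n+j))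
  have hF4 : ((((n+j)+n+1)! : ℚ)) ≠ 0 := by exact_mod_cast (Nat.factorial_ne_zero _)
  have hP : (∏ i ∈ range n, ((j:ℚ) + i + 1)) = ((n+j)! : ℚ) / (j ! : ℚ) := by
    have h := fact_add_prod' j n
    have hc : ((j+n)! : ℚ) = (j ! : ℚ) * ∏ i ∈ range n, ((j:ℚ) + i + 1) := by
      rw [h]
      push_cast
      ring
    rw [show n + j = j + n by ring, hc]
    field_simp
  have hQ : (∏ i ∈ range (n+1), ((j:ℚ) + n + i + 1)) = (((n+j)+n+1)! : ℚ) / ((n+j)! : ℚ) := by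
    have h := fact_add_prod' (n+j) (n+1)
    have hc : (((n+j)+(n+1))! : ℚ) = ((n+j)! : ℚ) * ∏ i ∈ range (n+1), ((j:ℚ) + n + i + 1) := by
      rw [h]
      push_cast
      apply congrArg
      exact Finset.prod_congr rfl (fun i _ => by ring)
    rw [show (n+j)+n+1 = (n+j)+(n+1) by ring, hc]
    field_simp
  have hch : ((j+n).choose n : ℚ) * (n ! : ℚ) * (j ! : ℚ) = ((n+j)! : ℚ) := by
    have h := Nat.choose_mul_factorial_mul_factorial (Nat.le_add_left n j)
    have h2 : (j+n).choose n * n ! * (j+n-n)! = (j+n)! := h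
    rw [show j + n - n = j by omega] at h2
    rw [show n + j = j + n by ring]
    exact_mod_cast h2
  rw [hP, hQ]
  rw [div_pow, div_pow]
  field_simp
  linear_combination hch


section Main

variable {a : ℕ}

def isGood (a : ℕ) (x : ℝ) : Prop :=
  ∃ u v w : ℚ, x = (u:ℝ) + (v:ℝ) * L2 a + (w:ℝ) * Real.log (((a:ℝ) - 1) / (a:ℝ))

lemma isGood_zero : isGood a 0 := ⟨0, 0, 0, by simp⟩

lemma isGood_add {x y : ℝ} (hx : isGood a x) (hy : isGood a y) : isGood a (x + y) := by
  obtain ⟨u1, v1, w1, h1⟩ := hx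
  obtain ⟨u2, v2, w2, h2⟩ := hy
  exact ⟨u1 + u2, v1 + v2, w1 + w2, by rw [h1, h2]; push_cast; ring⟩

lemma isGood_ratmul (c : ℚ) {x : ℝ} (hx : isGood a x) : isGood a ((c:ℝ) * x) := by
  obtain ⟨u, v, w, h⟩ := hx
  exact ⟨c * u, c * v, c * w, by rw [h]; push_cast; ring⟩

lemma isGood_sum {s : Finset ℕ} {f : ℕ → ℝ} (h : ∀ i ∈ s, isGood a (f i)) :
    isGood a (∑ i ∈ s, f i) :=
  Finset.sum_induction f (fun x => isGood a x) (fun _ _ hx hy => isGood_add hx hy) isGood_zero h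

lemma isGood_beukersE (ha : 2 ≤ a) (n : ℕ) : isGood a (beukersE a n) := by
  obtain ⟨α, β, hpf⟩ := partial_frac n
  have hhs := beukersE_hasSum (a := a) (n := n) ha
  set q : ℝ := (a:ℝ)⁻¹ with hq_def
  have hterm : ∀ j : ℕ, ((j + n).choose n : ℝ) * q^j * (bJ (n+j) n)^2
      = ∑ i ∈ range (n+1), ((α i : ℝ) * (q^j / ((j:ℝ)+n+i+1))
          + (β i : ℝ) * (q^j / ((j:ℝ)+n+i+1)^2)) := by
    intro j
    have hQ : ((j + n).choose n : ℚ) * ((((n+j)! : ℚ) * (n ! : ℚ)) / (((n+j)+n+1)! : ℚ))^2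
        = ∑ i ∈ range (n+1), (α i / ((j:ℚ) + n + i + 1) + β i / ((j:ℚ) + n + i + 1)^2) := by
      rw [term_rat]
      exact hpf j
    have hcast : ((j + n).choose n : ℝ) * q^j * (bJ (n+j) n)^2
        = q^j * ((((j + n).choose n : ℚ)
            * ((((n+j)! : ℚ) * (n ! : ℚ)) / (((n+j)+n+1)! : ℚ))^2 : ℚ) : ℝ) := by
      rw [bJ_eval]
      push_cast
      ring
    rw [hcast, hQ]
    push_cast
    rw [Finset.mul_sum]
    apply Finset.sum_congr rfl
    intro i _
    ring
  have hs1 : ∀ i ∈ range (n+1),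
      Summable (fun j : ℕ => (α i : ℝ) * (q^j / ((j:ℝ)+n+i+1))) := by
    intro i _
    apply Summable.mul_left
    apply (summable_aux ha 1 (n+i+1) (by omega)).congr
    intro j
    rw [pow_one]
    push_cast
    ring
  have hs2 : ∀ i ∈ range (n+1),
      Summable (fun j : ℕ => (β i : ℝ) * (q^j / ((j:ℝ)+n+i+1)^2)) := by
    intro i _
    apply Summable.mul_left
    apply (summable_aux ha 2 (n+i+1) (by omega)).congr
    intro j
    push_cast
    ring
  have hsum_i : ∀ i ∈ range (n+1), Summable (fun j : ℕ =>
      (α i : ℝ) * (q^j / ((j:ℝ)+n+i+1)) + (β i : ℝ) * (q^j / ((j:ℝ)+n+i+1)^2)) :=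
    fun i hi => (hs1 i hi).add (hs2 i hi)
  have hE : beukersE a n = ∑ i ∈ range (n+1), ∑' j : ℕ,
      ((α i : ℝ) * (q^j / ((j:ℝ)+n+i+1)) + (β i : ℝ) * (q^j / ((j:ℝ)+n+i+1)^2)) := by
    rw [← hhs.tsum_eq, tsum_congr hterm]
    exact Summable.tsum_finsetSum hsum_i
  rw [hE]
  apply isGood_sum
  intro i hi
  rw [Summable.tsum_add (hs1 i hi) (hs2 i hi), tsum_mul_left, tsum_mul_left]
  apply isGood_add <;> apply isGood_ratmul
  · have hfix : (∑' j : ℕ, q^j / ((j:ℝ)+n+i+1))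
        = ∑' j : ℕ, q^j / ((j:ℝ) + ((n+i+1 : ℕ):ℝ)) :=
      tsum_congr (fun j => by push_cast; ring)
    obtain ⟨u, v, h⟩ := sigma1 ha (n+i+1) (by omega)
    exact ⟨u, 0, v, by rw [hfix, h]; push_cast; ring⟩
  · have hfix : (∑' j : ℕ, q^j / ((j:ℝ)+n+i+1)^2)
        = ∑' j : ℕ, q^j / ((j:ℝ) + ((n+i+1 : ℕ):ℝ))^2 :=
      tsum_congr (fun j => by push_cast; ring)
    obtain ⟨u, v, h⟩ := sigma2 ha (n+i+1) (by omega)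
    exact ⟨u, v, 0, by rw [hfix, h]; push_cast; ring⟩

end Main

theorem beukersE_rational_structure (a : ℕ) (ha : 2 ≤ a) :
    ∃ A B C : ℕ → ℚ, ∀ n : ℕ,
      beukersE a n = (A n : ℝ) + (B n : ℝ) * L2 a +
        (C n : ℝ) * Real.log (((a : ℝ) - 1) / (a : ℝ)) := by
  have h : ∀ n : ℕ, isGood a (beukersE a n) := isGood_beukersE ha
  choose A B C h using h
  exact ⟨A, B, C, h⟩
end
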